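/- arXiv:0809.0384 — 10 statements merged into one kernel-verified Lean document; each statement's English description precedes it below -/
import Mathlib

section
/- Let V be a finite-dimensional complex vector space and let 𝒜 be a finite essential collection of linear hyperplanes in V (essential means ⋂_{H∈𝒜} H = {0}). If P ∈ GL(V) satisfies P(H) ⊆ H for every H ∈ 𝒜, then P is semisimple (diagonalizable). -/
open Polynomial

/-- If `𝒜` is a finite essential collection of hyperplanes in a
finite-dimensional complex vector space `V` and `P ∈ GL(V)` maps every `H ∈ 𝒜` into itself,
then `P` is semisimple (diagonalizable). -/
theorem stmt_0 {V : Type*} [AddCommGroup V] [Module ℂ V] [FiniteDimensional ℂ V]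
    (𝒜 : Set (Submodule ℂ V)) (hfin : 𝒜.Finite)
    (hhyp : ∀ H ∈ 𝒜, ∃ f : V →ₗ[ℂ] ℂ, f ≠ 0 ∧ LinearMap.ker f = H)
    (hess : sInf 𝒜 = (⊥ : Submodule ℂ V))
    (P : V ≃ₗ[ℂ] V)
    (hP : ∀ H ∈ 𝒜, Submodule.map (P : V →ₗ[ℂ] V) H ≤ H) :
    Module.End.IsSemisimple (P : V →ₗ[ℂ] V) := by
  classical
  have hchoice : ∀ H ∈ 𝒜, ∃ f : V →ₗ[ℂ] ℂ, ∃ c : ℂ,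
      LinearMap.ker f = H ∧ f ∘ₗ (P : V →ₗ[ℂ] V) = c • f := by
    intro H hH
    obtain ⟨f, hf0, hker⟩ := hhyp H hH
    -- P maps H onto H
    have hmap : Submodule.map (P : V →ₗ[ℂ] V) H = H := by
      refine Submodule.eq_of_le_of_finrank_eq (hP H hH) ?_
      rw [LinearEquiv.finrank_map_eq]
    have hcomap : Submodule.comap (P : V →ₗ[ℂ] V) H = H := by
      conv_lhs => rw [← hmap]
      exact Submodule.comap_map_eq_of_injective P.injective H
    -- the functional f ∘ P has the same kernel as f, so it is a multiple of f
    have hkerfP : LinearMap.ker (f ∘ₗ (P : V →ₗ[ℂ] V)) = LinearMap.ker f := by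
      rw [LinearMap.ker_comp, hker, hcomap]
    obtain ⟨x, hx⟩ : ∃ x, f x ≠ 0 := by
      by_contra h
      push_neg at h
      exact hf0 (LinearMap.ext fun v => h v)
    refine ⟨f, f (P x) / f x, hker, ?_⟩
    ext v
    have hv : v - (f v / f x) • x ∈ LinearMap.ker f := by
      simp only [LinearMap.mem_ker, map_sub, map_smul, smul_eq_mul]
      field_simp
      ring
    rw [← hkerfP] at hv
    simp only [LinearMap.mem_ker, LinearMap.comp_apply, map_sub, map_smul, smul_eq_mul,
      sub_eq_zero] at hv
    simp only [LinearMap.comp_apply, LinearMap.smul_apply, smul_eq_mul]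
    rw [hv]
    field_simp
    ring
    rfl
  choose! f c hker hc using hchoice
  set T : Finset ℂ := hfin.toFinset.image (fun H => c H) with hT
  set p : ℂ[X] := ∏ a ∈ T, (X - C a) with hpdef
  have hsq : Squarefree p := by
    refine Polynomial.Separable.squarefree ?_
    rw [hpdef]
    exact separable_prod_X_sub_C_iff'.mpr (fun i _ j _ h => h)
  refine Module.End.isSemisimple_of_squarefree_aeval_eq_zero hsq ?_
  ext v
  simp only [LinearMap.zero_apply]
  set w := aeval (P : V →ₗ[ℂ] V) p v with hw
  have hmem : w ∈ sInf 𝒜 := by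
    rw [Submodule.mem_sInf]
    intro H hH
    rw [← hker H hH, LinearMap.mem_ker]
    have hcT : c H ∈ T := Finset.mem_image_of_mem _ (hfin.mem_toFinset.mpr hH)
    have hfac : p = (X - C (c H)) * ∏ a ∈ T.erase (c H), (X - C a) :=
      (Finset.mul_prod_erase T _ hcT).symm
    set q : ℂ[X] := ∏ a ∈ T.erase (c H), (X - C a) with hq
    set u := aeval (P : V →ₗ[ℂ] V) q v with hu
    have : w = (P : V →ₗ[ℂ] V) u - (c H) • u := by
      rw [hw, hfac, map_mul, map_sub, aeval_X, aeval_C]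
      simp only [Module.End.mul_apply, LinearMap.sub_apply, ← hu]
      rw [Module.algebraMap_end_apply]
    rw [this, map_sub, map_smul]
    have := congrArg (fun g => g u) (hc H hH)
    simp only [LinearMap.comp_apply, LinearMap.smul_apply, smul_eq_mul] at this
    rw [this]
    simp [smul_eq_mul]
  rw [hess] at hmem
  simpa using hmem
end

section
/- Let V be a finite-dimensional complex vector space and let 𝒜 be a finite essential collection of linear hyperplanes in V. If x ∈ GL(V) is unipotent (i.e., x − 1 is nilpotent) and x permutes 𝒜 (i.e., x(H) ∈ 𝒜 for every H ∈ 𝒜), then x is the identity. -/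
open Finset in
lemma aux_exists_smul {V : Type*} [AddCommGroup V] [Module ℂ V]
    (f g : V →ₗ[ℂ] ℂ) (hf : f ≠ 0) (h : LinearMap.ker f ≤ LinearMap.ker g) :
    ∃ c : ℂ, g = c • f := by
  obtain ⟨v, hv⟩ : ∃ v, f v ≠ 0 := by
    by_contra hc; push_neg at hc
    exact hf (LinearMap.ext fun w => by simpa using hc w)
  refine ⟨g v / f v, LinearMap.ext fun w => ?_⟩
  have hw : w - (f w / f v) • v ∈ LinearMap.ker f := by
    simp [LinearMap.mem_ker, map_sub, map_smul, smul_eq_mul, div_mul_cancel₀ _ hv]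
  have hg := h hw
  rw [LinearMap.mem_ker, map_sub, map_smul, sub_eq_zero] at hg
  rw [hg]
  simp [smul_eq_mul]
  field_simp

open Finset in
lemma aux_unip_pow {R : Type*} [Ring R] (a : R) (h : IsNilpotent (a - 1)) (m : ℕ) :
    IsNilpotent (a ^ m - 1) := by
  have hfac : a ^ m - 1 = (∑ i ∈ Finset.range m, a ^ i) * (a - 1) := by
    have := (Commute.one_right a).geom_sum₂_mul m
    simpa using this.symm
  rw [hfac]
  have hc : Commute (∑ i ∈ Finset.range m, a ^ i) (a - 1) :=
    Commute.sum_left _ _ _ fun i _ =>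
      (((Commute.refl a).pow_left i).sub_right (Commute.one_right _))
  exact hc.isNilpotent_mul_left h

/-- unipotent endomorphism preserving ker f acts trivially mod ker f -/
lemma aux_key {V : Type*} [AddCommGroup V] [Module ℂ V]
    (y : V →ₗ[ℂ] V) (hy : IsNilpotent (y - 1)) (f : V →ₗ[ℂ] ℂ) (hf : f ≠ 0)
    (hst : LinearMap.ker f ≤ LinearMap.ker (f ∘ₗ y)) :
    ∀ v, f (y v) = f v := by
  obtain ⟨c, hc⟩ := aux_exists_smul f (f ∘ₗ y) hf hst
  have hstep : f ∘ₗ (y - 1) = (c - 1) • f := by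
    ext w
    simp [LinearMap.sub_apply, map_sub]
    have := LinearMap.congr_fun hc w
    simp at this
    rw [this]; ring
  have hind : ∀ k : ℕ, f ∘ₗ (y - 1) ^ k = (c - 1) ^ k • f := by
    intro k; induction k with
    | zero => ext w; simp
    | succ k ih =>
      rw [pow_succ]
      have : f ∘ₗ ((y - 1) ^ k * (y - 1)) = (f ∘ₗ (y - 1) ^ k) ∘ₗ (y - 1) := by
        ext w; simp [Module.End.mul_apply]
      rw [this, ih]
      ext w
      have := LinearMap.congr_fun hstep ((y - 1 : Module.End ℂ V) w)
      simp [pow_succ]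
      have h2 := LinearMap.congr_fun hstep w
      simp at h2
      rw [h2]; ring
  obtain ⟨r, hr⟩ := hy
  have h0 : ((c - 1) ^ r • f : V →ₗ[ℂ] ℂ) = 0 := by
    rw [← hind r, hr]; ext w; simp
  have hc1 : c = 1 := by
    rcases smul_eq_zero.mp h0 with h1 | h1
    · rcases Nat.eq_zero_or_pos r with hr0 | hr0
      · subst hr0; simp at h1
      · exact sub_eq_zero.mp ((pow_eq_zero_iff hr0.ne').mp h1)
    · exact absurd h1 hf
  intro v
  have := LinearMap.congr_fun hc v
  simp [hc1] at this
  simpa using this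

/-- unipotent of finite order is identity -/
lemma aux_finord {V : Type*} [AddCommGroup V] [Module ℂ V]
    (a : Module.End ℂ V) (h : IsNilpotent (a - 1)) (m : ℕ) (hm : m ≠ 0)
    (ha : a ^ m = 1) : a = 1 := by
  obtain ⟨m', rfl⟩ : ∃ m', m = m' + 1 := ⟨m - 1, (Nat.succ_pred_eq_of_ne_zero hm).symm⟩
  set N : Module.End ℂ V := a - 1 with hN
  have haN : a = N + 1 := by rw [hN]; abel
  have hexp : ∑ i ∈ Finset.range (m' + 1 + 1), N ^ i * (Nat.choose (m' + 1) i : Module.End ℂ V) = 1 := by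
    have := (Commute.one_right N).add_pow (m' + 1)
    rw [← haN, ha] at this
    simpa using this.symm
  rw [Finset.sum_range_succ'] at hexp
  simp only [pow_zero, Nat.choose_zero_right, Nat.cast_one, mul_one, one_mul] at hexp
  have h2 : (∑ i ∈ Finset.range (m' + 1),
      N ^ (i + 1) * ((m' + 1).choose (i + 1) : Module.End ℂ V)) = 0 :=
    add_eq_right.mp hexp
  rw [Finset.sum_range_succ'] at h2
  simp only [zero_add, pow_one, Nat.choose_one_right] at h2
  have h3 : N * ((m' + 1 : ℕ) : Module.End ℂ V)
      = -(∑ i ∈ Finset.range m', N ^ (i + 1 + 1) * ((m' + 1).choose (i + 1 + 1) : Module.End ℂ V)) :=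
    eq_neg_of_add_eq_zero_right h2
  set T : Module.End ℂ V :=
    -(∑ i ∈ Finset.range m', N ^ i * ((m' + 1).choose (i + 1 + 1) : Module.End ℂ V)) with hT
  have hsum : N * ((m' + 1 : ℕ) : Module.End ℂ V) = N ^ 2 * T := by
    rw [h3, hT, mul_neg, neg_inj, Finset.mul_sum]
    refine Finset.sum_congr rfl fun i _ => ?_
    rw [show i + 1 + 1 = 2 + i from by omega, pow_add, mul_assoc]
  have hcast : N * ((m' + 1 : ℕ) : Module.End ℂ V) = ((m' + 1 : ℕ) : ℂ) • N := by
    ext v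
    simp [Module.End.mul_apply, Module.End.natCast_apply, Nat.cast_smul_eq_nsmul, add_smul]
  set c : ℂ := ((m' + 1 : ℕ) : ℂ) with hcdef
  have hc0 : c ≠ 0 := Nat.cast_ne_zero.mpr (by omega)
  set S : Module.End ℂ V := c⁻¹ • T with hS
  have hNS : N = N ^ 2 * S := by
    calc N = c⁻¹ • (c • N) := by rw [smul_smul, inv_mul_cancel₀ hc0, one_smul]
    _ = c⁻¹ • (N ^ 2 * T) := by rw [← hcast, hsum]
    _ = N ^ 2 * (c⁻¹ • T) := by rw [mul_smul_comm]
  have hiter : ∀ k, N = N ^ (k + 1) * S ^ k := by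
    intro k; induction k with
    | zero => simp
    | succ k ih =>
      calc N = N ^ (k + 1) * S ^ k := ih
      _ = N ^ k * N * S ^ k := by rw [pow_succ]
      _ = N ^ k * (N ^ 2 * S) * S ^ k := by rw [← hNS]
      _ = N ^ (k + 1 + 1) * S ^ (k + 1) := by
          rw [sq, pow_succ, pow_succ, pow_succ']
          simp only [mul_assoc]
  obtain ⟨r, hr⟩ := h
  have hNzero : N = 0 := by
    have := hiter r
    rw [pow_succ, hr, zero_mul, zero_mul] at this
    exact this
  have : a - 1 = 0 := hN ▸ hNzero
  rw [sub_eq_zero] at this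
  exact this

/-- If `𝒜` is a finite essential collection of hyperplanes in a
finite-dimensional complex vector space `V` and `x ∈ GL(V)` is unipotent and permutes `𝒜`,
then `x` is the identity. -/
theorem stmt_1 {V : Type*} [AddCommGroup V] [Module ℂ V] [FiniteDimensional ℂ V]
    (𝒜 : Set (Submodule ℂ V)) (hfin : 𝒜.Finite)
    (hhyp : ∀ H ∈ 𝒜, ∃ f : V →ₗ[ℂ] ℂ, f ≠ 0 ∧ LinearMap.ker f = H)
    (hess : sInf 𝒜 = (⊥ : Submodule ℂ V))
    (x : V ≃ₗ[ℂ] V)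
    (hunip : IsNilpotent ((x : V →ₗ[ℂ] V) - LinearMap.id))
    (hperm : ∀ H ∈ 𝒜, Submodule.map (x : V →ₗ[ℂ] V) H ∈ 𝒜) :
    x = LinearEquiv.refl ℂ V := by
  classical
  set X : Module.End ℂ V := (x : V →ₗ[ℂ] V) with hX
  have hunip' : IsNilpotent (X - 1) := by
    simpa [Module.End.one_eq_id] using hunip
  have horb : ∀ n, ∀ H ∈ 𝒜, Submodule.map (X ^ n) H ∈ 𝒜 := by
    intro n; induction n with
    | zero => intro H hH; simpa [Module.End.one_eq_id, Submodule.map_id] using hH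
    | succ n ih =>
      intro H hH
      rw [pow_succ, Module.End.mul_eq_comp, Submodule.map_comp]
      exact ih _ (hperm H hH)
  have hXinj : Function.Injective ⇑X := x.injective
  have hinj : ∀ n, Function.Injective ⇑(X ^ n) := by
    intro n a b hab
    rw [Module.End.pow_apply, Module.End.pow_apply] at hab
    exact hXinj.iterate n hab
  have hper : ∀ H ∈ 𝒜, ∃ k, 0 < k ∧ Submodule.map (X ^ k) H = H := by
    intro H hH
    haveI : Finite ↥𝒜 := hfin.to_subtype
    obtain ⟨i, j, hij, heq⟩ := Finite.exists_ne_map_eq_of_infinite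
      (fun n : ℕ => (⟨Submodule.map (X ^ n) H, horb n H hH⟩ : 𝒜))
    have heq' : Submodule.map (X ^ i) H = Submodule.map (X ^ j) H := Subtype.ext_iff.mp heq
    have main : ∀ i j : ℕ, i < j → Submodule.map (X ^ i) H = Submodule.map (X ^ j) H →
        ∃ k, 0 < k ∧ Submodule.map (X ^ k) H = H := by
      intro i j hlt he
      refine ⟨j - i, by omega, ?_⟩
      have hj : j = i + (j - i) := by omega
      rw [hj, pow_add, Module.End.mul_eq_comp, Submodule.map_comp] at he
      exact (Submodule.map_injective_of_injective (hinj i) he).symm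
    rcases lt_or_gt_of_ne hij with h | h
    · exact main i j h heq'
    · exact main j i h heq'.symm
  set k' : Submodule ℂ V → ℕ := fun H => if h : H ∈ 𝒜 then (hper H h).choose else 1 with hk'
  have hk'pos : ∀ H, 0 < k' H := by
    intro H; by_cases h : H ∈ 𝒜
    · simp only [hk', dif_pos h]; exact (hper H h).choose_spec.1
    · simp [hk', h]
  have hk'map : ∀ H ∈ 𝒜, Submodule.map (X ^ k' H) H = H := by
    intro H h; simp only [hk', dif_pos h]; exact (hper H h).choose_spec.2
  set m : ℕ := ∏ H ∈ hfin.toFinset, k' H with hm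
  have hmpos : 0 < m := Finset.prod_pos fun H _ => hk'pos H
  have hdvd : ∀ H ∈ 𝒜, k' H ∣ m := fun H h =>
    Finset.dvd_prod_of_mem _ (hfin.mem_toFinset.mpr h)
  have hiterate : ∀ (k t : ℕ) (H : Submodule ℂ V), Submodule.map (X ^ k) H = H →
      Submodule.map (X ^ (k * t)) H = H := by
    intro k t H hkH; induction t with
    | zero => simp [Module.End.one_eq_id, Submodule.map_id]
    | succ t ih =>
      rw [Nat.mul_succ, pow_add, Module.End.mul_eq_comp, Submodule.map_comp, hkH]
      exact ih
  have hmmap : ∀ H ∈ 𝒜, Submodule.map (X ^ m) H = H := by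
    intro H h
    obtain ⟨t, ht⟩ := hdvd H h
    rw [ht]
    exact hiterate _ _ _ (hk'map H h)
  have hnil : IsNilpotent (X ^ m - 1) := aux_unip_pow X hunip' m
  have hdiff : ∀ H ∈ 𝒜, ∀ v, (X ^ m) v - v ∈ H := by
    intro H hH v
    obtain ⟨f, hf0, hker⟩ := hhyp H hH
    have hst : LinearMap.ker f ≤ LinearMap.ker (f ∘ₗ X ^ m) := by
      intro w hw
      rw [LinearMap.mem_ker, LinearMap.comp_apply]
      have hwH : w ∈ H := hker ▸ hw
      have hmem : (X ^ m) w ∈ H := by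
        rw [← hmmap H hH]; exact Submodule.mem_map_of_mem hwH
      rw [← hker] at hmem; exact hmem
    have hfix := aux_key (X ^ m) hnil f hf0 hst v
    rw [← hker, LinearMap.mem_ker, map_sub, hfix, sub_self]
  have hXm : X ^ m = 1 := by
    ext v
    have hv : (X ^ m) v - v ∈ sInf 𝒜 := Submodule.mem_sInf.mpr fun H hH => hdiff H hH v
    rw [hess, Submodule.mem_bot, sub_eq_zero] at hv
    simpa using hv
  have hX1 : X = 1 := aux_finord X hunip' m hmpos.ne' hXm
  refine LinearEquiv.toLinearMap_injective ?_
  simpa [Module.End.one_eq_id] using hX1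
end

section
/- Let W ⊆ GL(V) be a finite group generated by pseudo-reflections whose reflection arrangement 𝒜 is essential. If 𝒜 is irreducible—i.e., there is no direct sum decomposition V = V₁ ⊕ V₂ with V₁ ≠ 0 and V₂ ≠ 0 such that every H ∈ 𝒜 contains V₁ or contains V₂—then W acts irreducibly on V. -/
/-- `s` is a pseudo-reflection: an automorphism of finite order whose fixed subspace
`ker (s - 1)` is a hyperplane (the kernel of some nonzero linear form). -/
def IsPseudoReflection {V : Type*} [AddCommGroup V] [Module ℂ V] (s : V ≃ₗ[ℂ] V) : Prop :=
  IsOfFinOrder s ∧ ∃ f : V →ₗ[ℂ] ℂ, f ≠ 0 ∧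
    LinearMap.ker f = LinearMap.ker ((s : V →ₗ[ℂ] V) - LinearMap.id)

/-- The reflection arrangement of `W`: the set of hyperplanes `ker (s - 1)` for `s` a
pseudo-reflection in `W`. -/
def reflArrangement {V : Type*} [AddCommGroup V] [Module ℂ V] (W : Subgroup (V ≃ₗ[ℂ] V)) :
    Set (Submodule ℂ V) :=
  {H | ∃ s ∈ W, IsPseudoReflection s ∧ LinearMap.ker ((s : V →ₗ[ℂ] V) - LinearMap.id) = H}

/-- If the essential reflection arrangement of a finite pseudo-reflection
group `W` is irreducible (no direct sum decomposition `V = V₁ ⊕ V₂` with both summands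
nonzero such that every hyperplane contains `V₁` or `V₂`), then `W` acts irreducibly
on `V`. -/
theorem stmt_4 {V : Type*} [AddCommGroup V] [Module ℂ V] [FiniteDimensional ℂ V] [Nontrivial V]
    (W : Subgroup (V ≃ₗ[ℂ] V)) (hfin : (W : Set (V ≃ₗ[ℂ] V)).Finite)
    (hgen : W = Subgroup.closure {s : V ≃ₗ[ℂ] V | s ∈ W ∧ IsPseudoReflection s})
    (hess : sInf (reflArrangement W) = (⊥ : Submodule ℂ V))
    (hirrarr : ¬ ∃ V₁ V₂ : Submodule ℂ V, V₁ ≠ ⊥ ∧ V₂ ≠ ⊥ ∧ IsCompl V₁ V₂ ∧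
        ∀ H ∈ reflArrangement W, V₁ ≤ H ∨ V₂ ≤ H) :
    ∀ U : Submodule ℂ V,
      (∀ w ∈ W, Submodule.map (w : V →ₗ[ℂ] V) U ≤ U) → U = ⊥ ∨ U = ⊤ := by
  intro U hU
  by_contra hcon
  push_neg at hcon
  obtain ⟨hUbot, hUtop⟩ := hcon
  haveI : Fintype W := hfin.fintype
  -- membership form of invariance
  have hmem : ∀ (w : W) (x : V), x ∈ U → (w : V ≃ₗ[ℂ] V) x ∈ U := by
    intro w x hx
    exact hU (w : V ≃ₗ[ℂ] V) w.2 ⟨x, hx, rfl⟩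
  -- a (not necessarily equivariant) projection onto U
  obtain ⟨U₀, hcompl⟩ := Submodule.exists_isCompl U
  set π : V →ₗ[ℂ] V := U.subtype ∘ₗ (U.linearProjOfIsCompl U₀ hcompl) with hπdef
  have hπmem : ∀ x, π x ∈ U := fun x => (U.linearProjOfIsCompl U₀ hcompl x).2
  have hπid : ∀ x ∈ U, π x = x := by
    intro x hx
    have : U.linearProjOfIsCompl U₀ hcompl x = ⟨x, hx⟩ :=
      Submodule.linearProjOfIsCompl_apply_left hcompl ⟨x, hx⟩
    simp [hπdef, this]
  -- average over W
  set c : ℂ := (Fintype.card W : ℂ)⁻¹ with hcdef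
  have hcard : (Fintype.card W : ℂ) ≠ 0 := by
    exact_mod_cast (Nat.cast_ne_zero (R := ℂ)).2 Fintype.card_ne_zero
  set Q : V →ₗ[ℂ] V :=
    c • ∑ w : W, (((w : V ≃ₗ[ℂ] V) : V →ₗ[ℂ] V) ∘ₗ π ∘ₗ
      (((w⁻¹ : W) : V ≃ₗ[ℂ] V) : V →ₗ[ℂ] V)) with hQdef
  have hQapply : ∀ x : V,
      Q x = c • ∑ w : W, (w : V ≃ₗ[ℂ] V) (π (((w⁻¹ : W) : V ≃ₗ[ℂ] V) x)) := by
    intro x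
    simp [hQdef, LinearMap.sum_apply]
  -- Q lands in U
  have hQU : ∀ x : V, Q x ∈ U := by
    intro x
    rw [hQapply]
    refine Submodule.smul_mem _ _ (Submodule.sum_mem _ ?_)
    intro w _
    exact hmem w _ (hπmem _)
  -- Q is the identity on U
  have hQid : ∀ x ∈ U, Q x = x := by
    intro x hx
    rw [hQapply]
    have hterm : ∀ w : W,
        (w : V ≃ₗ[ℂ] V) (π (((w⁻¹ : W) : V ≃ₗ[ℂ] V) x)) = x := by
      intro w
      have h1 : ((w⁻¹ : W) : V ≃ₗ[ℂ] V) x ∈ U := hmem w⁻¹ x hx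
      rw [hπid _ h1]
      have : ((w⁻¹ : W) : V ≃ₗ[ℂ] V) = ((w : V ≃ₗ[ℂ] V))⁻¹ := by
        simp
      rw [this]
      exact (w : V ≃ₗ[ℂ] V).apply_symm_apply x
    rw [Finset.sum_congr rfl (fun w _ => hterm w), Finset.sum_const]
    simp only [Finset.card_univ, ← Nat.cast_smul_eq_nsmul ℂ, smul_smul, hcdef]
    rw [inv_mul_cancel₀ hcard, one_smul]
  -- Q is W-equivariant
  have happ : ∀ (a b : V ≃ₗ[ℂ] V) (y : V), (a * b) y = a (b y) := fun _ _ _ => rfl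
  have hQequiv : ∀ (g : W) (x : V), Q ((g : V ≃ₗ[ℂ] V) x) = (g : V ≃ₗ[ℂ] V) (Q x) := by
    intro g x
    rw [hQapply, hQapply, map_smul, map_sum]
    congr 1
    have hinv : ∀ (a : V ≃ₗ[ℂ] V) (y : V), a (a⁻¹ y) = y := fun a y => a.apply_symm_apply y
    refine Fintype.sum_bijective (fun u => g⁻¹ * u) (Group.mulLeft_bijective g⁻¹) _ _ ?_
    intro u
    simp only [mul_inv_rev, inv_inv, Subgroup.coe_mul, InvMemClass.coe_inv, happ, hinv]
  -- Q ∘ Q = Q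
  have hQQ : ∀ x, Q (Q x) = Q x := fun x => hQid _ (hQU x)
  -- the complement
  have hKinv : ∀ (w : W) (x : V), x ∈ LinearMap.ker Q → (w : V ≃ₗ[ℂ] V) x ∈ LinearMap.ker Q := by
    intro w x hx
    rw [LinearMap.mem_ker] at hx ⊢
    rw [hQequiv, hx, map_zero]
  have hcompl2 : IsCompl U (LinearMap.ker Q) := by
    constructor
    · rw [disjoint_iff]
      rw [eq_bot_iff]
      rintro x ⟨hxU, hxK⟩
      have : Q x = 0 := hxK
      have h2 : Q x = x := hQid x hxU
      simp only [Submodule.mem_bot]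
      rw [← h2, this]
    · rw [codisjoint_iff, eq_top_iff]
      intro x _
      have hx1 : x - Q x ∈ LinearMap.ker Q := by
        rw [LinearMap.mem_ker, map_sub, hQQ, sub_self]
      have : x = Q x + (x - Q x) := by abel
      rw [this]
      exact Submodule.add_mem_sup (hQU x) hx1
  -- ker Q ≠ ⊥
  have hKbot : LinearMap.ker Q ≠ ⊥ := by
    intro hK
    apply hUtop
    rw [eq_top_iff]
    intro x _
    have hx1 : x - Q x ∈ LinearMap.ker Q := by
      rw [LinearMap.mem_ker, map_sub, hQQ, sub_self]
    rw [hK, Submodule.mem_bot, sub_eq_zero] at hx1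
    rw [hx1]
    exact hQU x
  -- every hyperplane of the arrangement contains U or ker Q
  apply hirrarr
  refine ⟨U, LinearMap.ker Q, hUbot, hKbot, hcompl2, ?_⟩
  rintro H ⟨s, hsW, ⟨-, f, hf0, hkerf⟩, rfl⟩
  by_contra hcontra
  push_neg at hcontra
  obtain ⟨hUH, hKH⟩ := hcontra
  obtain ⟨u, huU, huH⟩ := SetLike.not_le_iff_exists.1 hUH
  obtain ⟨u', huK, huH'⟩ := SetLike.not_le_iff_exists.1 hKH
  -- pick v₀ with f v₀ = 1
  obtain ⟨y, hy⟩ : ∃ y, f y ≠ 0 := by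
    by_contra h
    push_neg at h
    exact hf0 (LinearMap.ext fun y => h y)
  set v₀ : V := (f y)⁻¹ • y with hv₀def
  have hfv₀ : f v₀ = 1 := by
    simp [hv₀def, inv_mul_cancel₀ hy]
  set T : V →ₗ[ℂ] V := (s : V →ₗ[ℂ] V) - LinearMap.id with hTdef
  set e : V := T v₀ with hedef
  have hTform : ∀ x : V, T x = f x • e := by
    intro x
    have hk : x - f x • v₀ ∈ LinearMap.ker f := by
      rw [LinearMap.mem_ker, map_sub, map_smul, hfv₀, smul_eq_mul, mul_one, sub_self]
    rw [hkerf, LinearMap.mem_ker] at hk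
    have : T x - f x • T v₀ = 0 := by
      rw [← map_smul, ← map_sub]; exact hk
    rw [sub_eq_zero] at this
    rw [this, hedef]
  -- u not in the hyperplane means T u ≠ 0
  have hTu : T u ≠ 0 := fun h => huH (LinearMap.mem_ker.2 h)
  have hTu' : T u' ≠ 0 := fun h => huH' (LinearMap.mem_ker.2 h)
  have hfu : f u ≠ 0 := by
    intro h; apply hTu; rw [hTform, h, zero_smul]
  have hfu' : f u' ≠ 0 := by
    intro h; apply hTu'; rw [hTform, h, zero_smul]
  have he : e ≠ 0 := by
    intro h; apply hTu; rw [hTform, h, smul_zero]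
  -- T u ∈ U and T u' ∈ ker Q
  have hTuU : T u ∈ U := by
    have h1 : (s : V →ₗ[ℂ] V) u ∈ U := hmem ⟨s, hsW⟩ u huU
    have : T u = (s : V →ₗ[ℂ] V) u - u := by simp [hTdef]
    rw [this]
    exact Submodule.sub_mem _ h1 huU
  have hTuK : T u' ∈ LinearMap.ker Q := by
    have h1 : (s : V →ₗ[ℂ] V) u' ∈ LinearMap.ker Q := hKinv ⟨s, hsW⟩ u' huK
    have : T u' = (s : V →ₗ[ℂ] V) u' - u' := by simp [hTdef]
    rw [this]
    exact Submodule.sub_mem _ h1 huK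
  -- hence e lies in both, contradiction
  have heU : e ∈ U := by
    have : e = (f u)⁻¹ • T u := by
      rw [hTform, smul_smul, inv_mul_cancel₀ hfu, one_smul]
    rw [this]
    exact Submodule.smul_mem _ _ hTuU
  have heK : e ∈ LinearMap.ker Q := by
    have : e = (f u')⁻¹ • T u' := by
      rw [hTform, smul_smul, inv_mul_cancel₀ hfu', one_smul]
    rw [this]
    exact Submodule.smul_mem _ _ hTuK
  have : e ∈ U ⊓ LinearMap.ker Q := ⟨heU, heK⟩
  rw [hcompl2.inf_eq_bot, Submodule.mem_bot] at this
  exact he this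
end

section
/- Let W ⊆ GL(V) be a finite group generated by pseudo-reflections, with a W-invariant hermitian inner product on V. If V admits a basis L consisting of roots of W such that the graph on L joining two roots whenever they are not orthogonal is connected, then W acts irreducibly on V. -/
open scoped ComplexInnerProductSpace

/-- `v` is a root of `W`: a (nonzero) eigenvector of some pseudo-reflection `s ∈ W`
with `s v ≠ v`. -/
def IsRoot {V : Type*} [AddCommGroup V] [Module ℂ V] (W : Subgroup (V ≃ₗ[ℂ] V)) (v : V) :
    Prop :=
  v ≠ 0 ∧ ∃ s ∈ W, IsPseudoReflection s ∧ (∃ c : ℂ, s v = c • v) ∧ s v ≠ v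

/-- If `V` admits a basis `L` of roots of the finite pseudo-reflection
group `W` (which preserves a hermitian inner product on `V`) whose graph (joining two
roots iff they are not orthogonal) is connected, then `W` acts irreducibly on `V`. -/
theorem stmt_6 {V : Type*} [NormedAddCommGroup V] [InnerProductSpace ℂ V]
    [FiniteDimensional ℂ V] [Nontrivial V]
    (W : Subgroup (V ≃ₗ[ℂ] V)) (hfin : (W : Set (V ≃ₗ[ℂ] V)).Finite)
    (hgen : W = Subgroup.closure {s : V ≃ₗ[ℂ] V | s ∈ W ∧ IsPseudoReflection s})
    (hinv : ∀ w ∈ W, ∀ x y : V, ⟪w x, w y⟫ = ⟪x, y⟫)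
    (L : Finset V)
    (hroots : ∀ v ∈ L, IsRoot W v)
    (hli : LinearIndependent ℂ (fun v : L => (v : V)))
    (hspan : Submodule.span ℂ (L : Set V) = ⊤)
    (hconn : (SimpleGraph.fromRel fun v₁ v₂ : L => ⟪(v₁ : V), (v₂ : V)⟫ ≠ 0).Connected) :
    ∀ U : Submodule ℂ V,
      (∀ w ∈ W, Submodule.map (w : V →ₗ[ℂ] V) U ≤ U) → U = ⊥ ∨ U = ⊤ := by
  intro U hU
  -- the orthogonal complement is also invariant
  have hUo : ∀ w ∈ W, ∀ x ∈ Uᗮ, w x ∈ Uᗮ := by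
    intro w hw x hx
    rw [Submodule.mem_orthogonal]
    intro u hu
    have h1 : (w⁻¹ : V ≃ₗ[ℂ] V) u ∈ U := hU w⁻¹ (W.inv_mem hw) ⟨u, hu, rfl⟩
    have h2 := hinv w hw ((w⁻¹ : V ≃ₗ[ℂ] V) u) x
    have h3 : w ((w⁻¹ : V ≃ₗ[ℂ] V) u) = u := w.apply_symm_apply u
    rw [h3] at h2
    rw [h2]
    exact hx _ h1
  -- every root lies in `U` or in `Uᗮ`
  have key : ∀ v ∈ L, v ∈ U ∨ v ∈ Uᗮ := by
    intro v hv
    obtain ⟨hv0, s, hsW, ⟨hsfin, f, hf0, hker⟩, ⟨c, hc⟩, hne⟩ := hroots v hv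
    have hc1 : c ≠ 1 := by
      rintro rfl; exact hne (by simpa using hc)
    obtain ⟨u, hu, u', hu', huu⟩ := U.exists_add_mem_mem_orthogonal v
    -- s u = c • u and s u' = c • u'
    have hsu : s u ∈ U := hU s hsW ⟨u, hu, rfl⟩
    have hsu' : s u' ∈ Uᗮ := hUo s hsW u' hu'
    have hdec : s u + s u' = c • u + c • u' := by
      have : s (u + u') = c • (u + u') := by rw [← huu, hc, huu]
      simpa [map_add, smul_add] using this
    have heq : s u - c • u = c • u' - s u' := by
      have := hdec; linear_combination (norm := module) this
    have hmem : s u - c • u ∈ U ⊓ Uᗮ := by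
      constructor
      · exact U.sub_mem hsu (U.smul_mem c hu)
      · rw [heq]; exact Uᗮ.sub_mem (Uᗮ.smul_mem c hu') hsu'
    rw [Submodule.inf_orthogonal_eq_bot, Submodule.mem_bot] at hmem
    have hsu2 : s u = c • u := sub_eq_zero.mp hmem
    have hsu'2 : s u' = c • u' := by
      have h := heq; rw [hmem] at h
      exact (sub_eq_zero.mp h.symm).symm
    -- key dichotomy via the linear form f
    have hker' : ∀ x : V, f x = 0 → s x = x := by
      intro x hx
      have : x ∈ LinearMap.ker ((s : V →ₗ[ℂ] V) - LinearMap.id) := by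
        rw [← hker]; exact hx
      have := LinearMap.mem_ker.mp this
      simp only [LinearMap.sub_apply, LinearMap.id_apply, sub_eq_zero] at this
      simpa using this
    by_cases hfu' : f u' = 0
    · -- then s u' = u', but s u' = c • u', so u' = 0 and v ∈ U
      left
      have h1 : s u' = u' := hker' u' hfu'
      have h2 : (c - 1) • u' = 0 := by
        rw [sub_smul, one_smul, ← hsu'2, h1, sub_self]
      have hu'0 : u' = 0 := by
        rcases smul_eq_zero.mp h2 with h | h
        · exact absurd (sub_eq_zero.mp h) hc1
        · exact h
      rw [huu, hu'0, add_zero]; exact hu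
    · -- then u is a multiple of u', hence u = 0 and v ∈ Uᗮ
      right
      set x := (f u') • u - (f u) • u' with hx
      have hfx : f x = 0 := by
        rw [hx, map_sub, map_smul, map_smul, smul_eq_mul, smul_eq_mul]; ring
      have hsx : s x = x := hker' x hfx
      have hsx2 : s x = c • x := by
        rw [hx, map_sub, map_smul, map_smul, hsu2, hsu'2, smul_sub,
          smul_comm (f u') c, smul_comm (f u) c]
      have hx0 : x = 0 := by
        have h2 : (c - 1) • x = 0 := by
          rw [sub_smul, one_smul, ← hsx2, hsx, sub_self]
        rcases smul_eq_zero.mp h2 with h | h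
        · exact absurd (sub_eq_zero.mp h) hc1
        · exact h
      have hux : (f u') • u = (f u) • u' := by
        have := hx0; rw [hx] at this; exact sub_eq_zero.mp this
      have humem : u ∈ Uᗮ := by
        have : u = ((f u')⁻¹ * f u) • u' := by
          rw [mul_smul, ← hux, ← mul_smul, inv_mul_cancel₀ hfu', one_smul]
        rw [this]; exact Uᗮ.smul_mem _ hu'
      have hu0 : u = 0 := by
        have : u ∈ U ⊓ Uᗮ := ⟨hu, humem⟩
        rwa [Submodule.inf_orthogonal_eq_bot, Submodule.mem_bot] at this
      rw [huu, hu0, zero_add]; exact hu'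
  -- no root is in both
  have hnotboth : ∀ v ∈ L, ¬(v ∈ U ∧ v ∈ Uᗮ) := by
    rintro v hv ⟨h1, h2⟩
    have : v ∈ U ⊓ Uᗮ := ⟨h1, h2⟩
    rw [Submodule.inf_orthogonal_eq_bot, Submodule.mem_bot] at this
    exact (hroots v hv).1 this
  -- adjacency preserves membership in U
  set G := SimpleGraph.fromRel fun v₁ v₂ : L => ⟪(v₁ : V), (v₂ : V)⟫ ≠ 0 with hG
  have hadj : ∀ a b : L, G.Adj a b → ((a : V) ∈ U ↔ (b : V) ∈ U) := by
    intro a b hab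
    rw [hG, SimpleGraph.fromRel_adj] at hab
    obtain ⟨hne, hr⟩ := hab
    have hinner : ⟪(a : V), (b : V)⟫ ≠ 0 := by
      rcases hr with h | h
      · exact h
      · exact fun h0 => h (inner_eq_zero_symm.mp h0)
    constructor
    · intro ha
      rcases key b b.2 with h | h
      · exact h
      · exact absurd (h _ ha) hinner
    · intro hb
      rcases key a a.2 with h | h
      · exact h
      · exact absurd (inner_eq_zero_symm.mp (h _ hb)) hinner
  have hreach : ∀ a b : L, G.Reachable a b → ((a : V) ∈ U ↔ (b : V) ∈ U) := by
    intro a b hab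
    obtain ⟨p⟩ := hab
    induction p with
    | nil => rfl
    | cons h p ih => exact (hadj _ _ h).trans ih
  -- L is nonempty
  have hLne : L.Nonempty := by
    by_contra h
    rw [Finset.not_nonempty_iff_eq_empty] at h
    rw [h] at hspan
    simp at hspan
  obtain ⟨v₀, hv₀⟩ := hLne
  rcases key v₀ hv₀ with h₀ | h₀
  · right
    rw [eq_top_iff, ← hspan, Submodule.span_le]
    intro v hv
    exact (hreach ⟨v₀, hv₀⟩ ⟨v, hv⟩ (hconn.preconnected _ _)).mp h₀
  · left
    have hall : ∀ v ∈ L, v ∈ Uᗮ := by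
      intro v hv
      rcases key v hv with h | h
      · exfalso
        have := (hreach ⟨v₀, hv₀⟩ ⟨v, hv⟩ (hconn.preconnected _ _)).mpr h
        exact hnotboth v₀ hv₀ ⟨this, h₀⟩
      · exact h
    have : (⊤ : Submodule ℂ V) ≤ Uᗮ := by
      rw [← hspan]
      exact Submodule.span_le.mpr fun v hv => hall v hv
    rw [eq_bot_iff]
    intro x hx
    have hxo : x ∈ Uᗮ := this trivial
    have : ⟪x, x⟫ = 0 := hxo x hx
    simpa using inner_self_eq_zero.mp this
end

section
/- Let W ⊆ GL(V) be a finite group generated by pseudo-reflections acting irreducibly on V, with dim V = n ≥ 2, and fix a W-invariant hermitian inner product on V. Then there exists a nonzero vector v' ∈ V such that the parabolic subgroup W₀ = {w ∈ W : w·v' = v'} stabilizes the orthogonal complement (ℂv')^⊥, which has dimension n − 1, and W₀ acts irreducibly on (ℂv')^⊥. -/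
open Module

open scoped ComplexInnerProductSpace

namespace Stmt7Aux

set_option linter.unusedSectionVars false

variable {V : Type*} [NormedAddCommGroup V] [InnerProductSpace ℂ V] [FiniteDimensional ℂ V]

/-- Root datum for a specific unitary pseudo-reflection `s`: a nonzero vector `α` whose
orthogonal complement is exactly the fixed space of `s` and which spans the image of `s - 1`. -/
def RootData (s : V ≃ₗ[ℂ] V) (α : V) : Prop :=
  α ≠ 0 ∧ (∀ x : V, ⟪α, x⟫ = 0 ↔ s x = x) ∧ (∀ x : V, ∃ c : ℂ, s x - x = c • α)

/-- `α` is a root of some reflection of `W`. -/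
def IsRootOf (W : Subgroup (V ≃ₗ[ℂ] V)) (α : V) : Prop :=
  ∃ s ∈ W, RootData s α

variable {W : Subgroup (V ≃ₗ[ℂ] V)}

theorem mul_apply' (w s : V ≃ₗ[ℂ] V) (x : V) : (w * s) x = w (s x) := rfl
theorem inv_apply' (w : V ≃ₗ[ℂ] V) (x : V) : w⁻¹ x = w.symm x := rfl

theorem exists_rootData (hinv : ∀ w ∈ W, ∀ x y : V, ⟪w x, w y⟫ = ⟪x, y⟫)
    {s : V ≃ₗ[ℂ] V} (hsW : s ∈ W) (hs : IsPseudoReflection s) :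
    ∃ α : V, RootData s α := by
  obtain ⟨-, f, hf0, hker⟩ := hs
  set H : Submodule ℂ V := LinearMap.ker ((s : V →ₗ[ℂ] V) - LinearMap.id) with hH
  have hmemH : ∀ x : V, x ∈ H ↔ s x = x := by
    intro x
    simp [hH, LinearMap.mem_ker, sub_eq_zero]
  have hrkH : finrank ℂ H + 1 = finrank ℂ V := by
    rw [← hker]; exact Module.Dual.finrank_ker_add_one_of_ne_zero hf0
  have hrkO : finrank ℂ H + finrank ℂ (Hᗮ : Submodule ℂ V) = finrank ℂ V :=
    Submodule.finrank_add_finrank_orthogonal H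
  have hrk1 : finrank ℂ (Hᗮ : Submodule ℂ V) = 1 := by omega
  have hne : (Hᗮ : Submodule ℂ V) ≠ ⊥ := by
    intro h; rw [h] at hrk1; simp at hrk1
  obtain ⟨α, hαH, hα0⟩ := Submodule.exists_mem_ne_zero_of_ne_bot hne
  have hspan : (ℂ ∙ α) = Hᗮ := by
    apply Submodule.eq_of_le_of_finrank_eq
    · rwa [Submodule.span_singleton_le_iff_mem]
    · rw [finrank_span_singleton hα0, hrk1]
  have hsub : ∀ x : V, s x - x ∈ Hᗮ := by
    intro x
    rw [Submodule.mem_orthogonal']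
    intro u hu
    have hsu : s u = u := (hmemH u).1 hu
    rw [inner_sub_left, ← hsu, hinv s hsW x u, hsu, sub_self]
  refine ⟨α, hα0, ?_, ?_⟩
  · intro x
    constructor
    · intro hx
      have hxmem : x ∈ (ℂ ∙ α)ᗮ := by
        rw [Submodule.mem_orthogonal]
        intro u hu
        obtain ⟨c, rfl⟩ := Submodule.mem_span_singleton.1 hu
        rw [inner_smul_left, hx, mul_zero]
      rw [hspan, Submodule.orthogonal_orthogonal] at hxmem
      exact (hmemH x).1 hxmem
    · intro hx
      have hxH : x ∈ H := (hmemH x).2 hx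
      have := (Submodule.mem_orthogonal H α).1 hαH
      exact inner_eq_zero_symm.1 (this x hxH)
  · intro x
    have := hsub x
    rw [← hspan] at this
    obtain ⟨c, hc⟩ := Submodule.mem_span_singleton.1 this
    exact ⟨c, hc.symm⟩

theorem isRootOf_map (hinv : ∀ w ∈ W, ∀ x y : V, ⟪w x, w y⟫ = ⟪x, y⟫)
    {w : V ≃ₗ[ℂ] V} (hw : w ∈ W) {α : V} (hα : IsRootOf W α) :
    IsRootOf W (w α) := by
  obtain ⟨s, hsW, hα0, hiff, hc⟩ := hα
  refine ⟨w * s * w⁻¹, mul_mem (mul_mem hw hsW) (inv_mem hw), ?_, ?_, ?_⟩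
  · simpa using hα0
  · intro x
    have h1 : ⟪w α, x⟫ = ⟪α, w⁻¹ x⟫ := by
      have := hinv w⁻¹ (inv_mem hw) (w α) x
      rw [inv_apply', w.symm_apply_apply] at this
      exact this.symm
    have h2 : (w * s * w⁻¹) x = x ↔ s (w⁻¹ x) = w⁻¹ x := by
      rw [mul_apply', mul_apply']
      constructor
      · intro h
        have := congrArg w.symm h
        rwa [w.symm_apply_apply, ← inv_apply'] at this
      · intro h
        rw [h, inv_apply', w.apply_symm_apply]
    rw [h1, h2]
    exact hiff (w⁻¹ x)
  · intro x
    obtain ⟨c, hc'⟩ := hc (w⁻¹ x)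
    refine ⟨c, ?_⟩
    rw [mul_apply', mul_apply']
    calc w (s (w⁻¹ x)) - x = w (s (w⁻¹ x)) - w (w⁻¹ x) := by
          rw [inv_apply', w.apply_symm_apply]
      _ = w (s (w⁻¹ x) - w⁻¹ x) := by rw [map_sub]
      _ = w (c • α) := by rw [hc']
      _ = c • w α := by rw [map_smul]

theorem rootData_dichotomy {s : V ≃ₗ[ℂ] V} {α : V} (hd : RootData s α)
    {U : Submodule ℂ V} (hU : Submodule.map (s : V →ₗ[ℂ] V) U ≤ U) :
    α ∈ U ∨ ∀ x ∈ U, ⟪α, x⟫ = 0 := by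
  obtain ⟨hα0, hiff, hc⟩ := hd
  by_cases h : ∀ x ∈ U, s x = x
  · exact Or.inr fun x hx => (hiff x).2 (h x hx)
  · push_neg at h
    obtain ⟨x, hxU, hsx⟩ := h
    obtain ⟨c, hc'⟩ := hc x
    have hc0 : c ≠ 0 := by
      rintro rfl
      rw [zero_smul, sub_eq_zero] at hc'
      exact hsx hc'
    have hsxU : s x ∈ U := hU ⟨x, hxU, rfl⟩
    have : s x - x ∈ U := sub_mem hsxU hxU
    rw [hc'] at this
    have hαU : α ∈ U := by
      have h2 := U.smul_mem c⁻¹ this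
      rwa [smul_smul, inv_mul_cancel₀ hc0, one_smul] at h2
    exact Or.inl hαU

variable
  (hgen : W = Subgroup.closure {s : V ≃ₗ[ℂ] V | s ∈ W ∧ IsPseudoReflection s})
  (hinv : ∀ w ∈ W, ∀ x y : V, ⟪w x, w y⟫ = ⟪x, y⟫)
  (hirr : ∀ U : Submodule ℂ V,
      (∀ w ∈ W, Submodule.map (w : V →ₗ[ℂ] V) U ≤ U) → U = ⊥ ∨ U = ⊤)

include hgen hinv hirr

/-- Extension step: if `M ≠ ⊤` contains a root, there is a root outside `M`
not orthogonal to `M`. -/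
theorem exists_root_step {M : Submodule ℂ V} (hM : M ≠ ⊤)
    {α : V} (hα : IsRootOf W α) (hαM : α ∈ M) :
    ∃ β : V, IsRootOf W β ∧ β ∉ M ∧ ∃ m ∈ M, ⟪β, m⟫ ≠ 0 := by
  by_contra hcon
  push_neg at hcon
  have hdich : ∀ β : V, IsRootOf W β → β ∈ M ∨ ∀ m ∈ M, ⟪β, m⟫ = 0 := by
    intro β hβ
    by_cases h : β ∈ M
    · exact Or.inl h
    · exact Or.inr (hcon β hβ h)
  set U : Submodule ℂ V := Submodule.span ℂ {β : V | IsRootOf W β ∧ β ∈ M} with hUdef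
  have hUM : U ≤ M := Submodule.span_le.2 fun β hβ => hβ.2
  have hgeninv : ∀ s : V ≃ₗ[ℂ] V, s ∈ W → IsPseudoReflection s →
      Submodule.map (s : V →ₗ[ℂ] V) U ≤ U := by
    intro s hsW hs
    obtain ⟨β, hβd⟩ := exists_rootData hinv hsW hs
    rw [hUdef, Submodule.map_span_le]
    rintro γ ⟨hγroot, hγM⟩
    simp only [LinearEquiv.coe_coe]
    rcases hdich β ⟨s, hsW, hβd⟩ with hβM | hβperp
    · obtain ⟨c, hc⟩ := hβd.2.2 γ
      have hsγ : s γ = γ + c • β := by rw [← hc]; abel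
      have hsγM : s γ ∈ M := by
        rw [hsγ]; exact M.add_mem hγM (M.smul_mem c hβM)
      exact Submodule.subset_span ⟨isRootOf_map hinv hsW hγroot, hsγM⟩
    · have : s γ = γ := (hβd.2.1 γ).1 (hβperp γ hγM)
      rw [this]
      exact Submodule.subset_span ⟨hγroot, hγM⟩
  have hWinv : ∀ w ∈ W, Submodule.map (w : V →ₗ[ℂ] V) U = U := by
    intro w hw
    have key : ∀ g : V ≃ₗ[ℂ] V,
        g ∈ Subgroup.closure {s : V ≃ₗ[ℂ] V | s ∈ W ∧ IsPseudoReflection s} →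
        Submodule.map (g : V →ₗ[ℂ] V) U = U := by
      intro g hg
      induction hg using Subgroup.closure_induction with
      | mem x hx =>
        apply Submodule.eq_of_le_of_finrank_eq (hgeninv x hx.1 hx.2)
        exact LinearEquiv.finrank_map_eq x U
      | one => simp
      | mul x y hx hy ihx ihy =>
        rw [LinearEquiv.coe_toLinearMap_mul, Module.End.mul_eq_comp, Submodule.map_comp,
          ihy, ihx]
      | inv x hx ih =>
        conv_lhs => rw [← ih]
        rw [← Submodule.map_comp, ← Module.End.mul_eq_comp, ← LinearEquiv.coe_toLinearMap_mul,
          inv_mul_cancel, LinearEquiv.coe_toLinearMap_one, Submodule.map_id]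
    exact key w (hgen ▸ hw)
  have hUW : U = ⊥ ∨ U = ⊤ := hirr U fun w hw => le_of_eq (hWinv w hw)
  obtain ⟨s, hsW, hsd⟩ := hα
  have hαU : α ∈ U := Submodule.subset_span ⟨⟨s, hsW, hsd⟩, hαM⟩
  rcases hUW with h | h
  · rw [h, Submodule.mem_bot] at hαU
    exact hsd.1 hαU
  · exact hM (top_le_iff.1 (h ▸ hUM))

/-- There is at least one root. -/
theorem exists_isRootOf [Nontrivial V] (hdim : 2 ≤ finrank ℂ V) :
    ∃ α : V, IsRootOf W α := by
  by_cases h : ∃ s : V ≃ₗ[ℂ] V, s ∈ W ∧ IsPseudoReflection s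
  · obtain ⟨s, hsW, hs⟩ := h
    obtain ⟨α, hd⟩ := exists_rootData hinv hsW hs
    exact ⟨α, s, hsW, hd⟩
  · exfalso
    have hWbot : W = ⊥ := by
      rw [hgen]
      convert Subgroup.closure_empty
      rw [Set.eq_empty_iff_forall_notMem]
      intro s hs
      exact h ⟨s, hs⟩
    obtain ⟨x, hx⟩ := exists_ne (0 : V)
    have := hirr (ℂ ∙ x) ?_
    · rcases this with h1 | h1
      · rw [Submodule.span_singleton_eq_bot] at h1
        exact hx h1
      · have := finrank_span_singleton (K := ℂ) hx
        rw [h1, finrank_top] at this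
        omega
    · intro w hw
      rw [hWbot, Subgroup.mem_bot] at hw
      subst hw
      simp

/-- A linearly independent chain of roots, each non-orthogonal to an earlier one. -/
theorem exists_chain [Nontrivial V] (hdim : 2 ≤ finrank ℂ V) (k : ℕ) (hk : 1 ≤ k) :
    k ≤ finrank ℂ V → ∃ α : Fin k → V, (∀ i, IsRootOf W (α i)) ∧ LinearIndependent ℂ α ∧
      ∀ i : Fin k, i.val ≠ 0 → ∃ j : Fin k, j < i ∧ ⟪α j, α i⟫ ≠ 0 := by
  induction k, hk using Nat.le_induction with
  | base =>
    intro _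
    obtain ⟨α, hα⟩ := exists_isRootOf hgen hinv hirr hdim
    refine ⟨fun _ => α, fun _ => hα, ?_, ?_⟩
    · obtain ⟨s, hsW, h0, -⟩ := hα
      exact linearIndependent_unique_iff.2 h0
    · intro i hi
      have := i.isLt
      omega
  | succ k hk1 IH =>
    intro hkn
    obtain ⟨α, hroots, hli, hconn⟩ := IH (by omega)
    set M : Submodule ℂ V := Submodule.span ℂ (Set.range α) with hMdef
    have hMrank : finrank ℂ M = k := by
      rw [hMdef, finrank_span_eq_card hli, Fintype.card_fin]
    have hMne : M ≠ ⊤ := by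
      intro h
      rw [h, finrank_top] at hMrank
      omega
    have hα0M : α ⟨0, by omega⟩ ∈ M := Submodule.subset_span (Set.mem_range_self _)
    obtain ⟨β, hβroot, hβM, m, hmM, hm⟩ :=
      exists_root_step hgen hinv hirr hMne (hroots ⟨0, by omega⟩) hα0M
    have hj : ∃ j : Fin k, ⟪α j, β⟫ ≠ 0 := by
      by_contra hco
      push_neg at hco
      apply hm
      have : ∀ x ∈ M, ⟪β, x⟫ = 0 := by
        intro x hx
        induction hx using Submodule.span_induction with
        | mem x hx =>
          obtain ⟨j, rfl⟩ := hx
          rw [← inner_eq_zero_symm]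
          exact hco j
        | zero => simp
        | add x y _ _ ihx ihy => rw [inner_add_right, ihx, ihy, add_zero]
        | smul c x _ ihx => rw [inner_smul_right, ihx, mul_zero]
      exact this m hmM
    obtain ⟨j0, hj0⟩ := hj
    refine ⟨Fin.snoc α β, ?_, ?_, ?_⟩
    · intro i
      refine Fin.lastCases ?_ ?_ i
      · rw [Fin.snoc_last]; exact hβroot
      · intro i0; rw [Fin.snoc_castSucc]; exact hroots i0
    · exact linearIndependent_fin_snoc.2 ⟨hli, by rwa [← hMdef]⟩
    · intro i
      refine Fin.lastCases ?_ ?_ i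
      · intro _hi
        refine ⟨j0.castSucc, Fin.castSucc_lt_last j0, ?_⟩
        rw [Fin.snoc_castSucc, Fin.snoc_last]
        exact hj0
      · intro i0 hi0
        have : i0.val ≠ 0 := by
          simpa using hi0
        obtain ⟨j, hji, hjne⟩ := hconn i0 this
        refine ⟨j.castSucc, ?_, ?_⟩
        · exact (Fin.castSucc_lt_castSucc_iff).2 hji
        · rw [Fin.snoc_castSucc, Fin.snoc_castSucc]
          exact hjne

end Stmt7Aux

/-- An irreducible finite pseudo-reflection group `W` on `V` of dimension
`n ≥ 2` (preserving a hermitian inner product) has an irreducible parabolic subgroup of rank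
`n - 1`: there is a nonzero `v' ∈ V` whose pointwise stabilizer `W₀ = {w ∈ W | w v' = v'}`
stabilizes the `(n-1)`-dimensional orthogonal complement `(ℂ v')ᗮ` and acts irreducibly on
it. -/
theorem stmt_7 {V : Type*} [NormedAddCommGroup V] [InnerProductSpace ℂ V]
    [FiniteDimensional ℂ V] [Nontrivial V]
    (W : Subgroup (V ≃ₗ[ℂ] V)) (hfin : (W : Set (V ≃ₗ[ℂ] V)).Finite)
    (hgen : W = Subgroup.closure {s : V ≃ₗ[ℂ] V | s ∈ W ∧ IsPseudoReflection s})
    (hinv : ∀ w ∈ W, ∀ x y : V, ⟪w x, w y⟫ = ⟪x, y⟫)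
    (hdim : 2 ≤ finrank ℂ V)
    (hirr : ∀ U : Submodule ℂ V,
      (∀ w ∈ W, Submodule.map (w : V →ₗ[ℂ] V) U ≤ U) → U = ⊥ ∨ U = ⊤) :
    ∃ v' : V, v' ≠ 0 ∧
      (∀ w ∈ W, w v' = v' →
        Submodule.map (w : V →ₗ[ℂ] V) ((ℂ ∙ v')ᗮ) = (ℂ ∙ v')ᗮ) ∧
      finrank ℂ ((ℂ ∙ v')ᗮ : Submodule ℂ V) = finrank ℂ V - 1 ∧
      (∀ U : Submodule ℂ V, U ≤ (ℂ ∙ v')ᗮ →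
        (∀ w ∈ W, w v' = v' → Submodule.map (w : V →ₗ[ℂ] V) U ≤ U) →
        U = ⊥ ∨ U = (ℂ ∙ v')ᗮ) := by
  classical
  set n := finrank ℂ V with hn
  obtain ⟨α, hroots, hli, hconn⟩ :=
    Stmt7Aux.exists_chain hgen hinv hirr hdim (n - 1) (by omega) (by omega)
  set M : Submodule ℂ V := Submodule.span ℂ (Set.range α) with hMdef
  have hMrank : finrank ℂ M = n - 1 := by
    rw [hMdef, finrank_span_eq_card hli, Fintype.card_fin]
  have hMperp : finrank ℂ (Mᗮ : Submodule ℂ V) = 1 := by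
    have := Submodule.finrank_add_finrank_orthogonal M
    rw [hMrank, ← hn] at this
    omega
  have hMperpne : (Mᗮ : Submodule ℂ V) ≠ ⊥ := by
    intro h; rw [h] at hMperp; simp at hMperp
  obtain ⟨v', hv'M, hv'0⟩ := Submodule.exists_mem_ne_zero_of_ne_bot hMperpne
  have hv'perp : ∀ x ∈ M, ⟪v', x⟫ = 0 := (Submodule.mem_orthogonal' M v').1 hv'M
  have hrank' : finrank ℂ ((ℂ ∙ v')ᗮ : Submodule ℂ V) = n - 1 := by
    have h1 : finrank ℂ (ℂ ∙ v' : Submodule ℂ V) = 1 := finrank_span_singleton hv'0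
    have := Submodule.finrank_add_finrank_orthogonal (ℂ ∙ v' : Submodule ℂ V)
    rw [h1, ← hn] at this
    omega
  have hMle : M ≤ (ℂ ∙ v')ᗮ := by
    intro m hm
    rw [Submodule.mem_orthogonal]
    intro u hu
    obtain ⟨c, rfl⟩ := Submodule.mem_span_singleton.1 hu
    rw [inner_smul_left, hv'perp m hm, mul_zero]
  have hMeq : M = (ℂ ∙ v')ᗮ :=
    Submodule.eq_of_le_of_finrank_eq hMle (by rw [hMrank, hrank'])
  have hstab : ∀ w ∈ W, w v' = v' →
      Submodule.map (w : V →ₗ[ℂ] V) ((ℂ ∙ v')ᗮ) = (ℂ ∙ v')ᗮ := by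
    intro w hw hwv
    apply Submodule.eq_of_le_of_finrank_eq
    · rintro _ ⟨x, hx, rfl⟩
      simp only [LinearEquiv.coe_coe]
      rw [Submodule.mem_orthogonal]
      intro u hu
      obtain ⟨c, rfl⟩ := Submodule.mem_span_singleton.1 hu
      have hx' : ⟪v', x⟫ = 0 := by
        have := (Submodule.mem_orthogonal (ℂ ∙ v') x).1 hx
        exact this v' (Submodule.mem_span_singleton_self v')
      calc ⟪c • v', w x⟫ = ⟪w (c • v'), w x⟫ := by rw [map_smul, hwv]
        _ = ⟪c • v', x⟫ := hinv w hw _ _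
        _ = 0 := by rw [inner_smul_left, hx', mul_zero]
    · exact LinearEquiv.finrank_map_eq w _
  refine ⟨v', hv'0, hstab, by rw [hrank', hn], ?_⟩
  intro U hUle hU
  by_cases hUbot : U = ⊥
  · exact Or.inl hUbot
  right
  obtain ⟨u, huU, hu0⟩ := Submodule.exists_mem_ne_zero_of_ne_bot hUbot
  have hsel : ∀ i, ∃ s ∈ W, Stmt7Aux.RootData s (α i) := hroots
  choose s hsW hdata using hsel
  have hfix : ∀ i, s i v' = v' := by
    intro i
    apply ((hdata i).2.1 v').1
    rw [inner_eq_zero_symm]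
    exact hv'perp (α i) (Submodule.subset_span (Set.mem_range_self i))
  have hdich : ∀ i, α i ∈ U ∨ ∀ x ∈ U, ⟪α i, x⟫ = 0 :=
    fun i => Stmt7Aux.rootData_dichotomy (hdata i) (hU (s i) (hsW i) (hfix i))
  have hexU : ∃ i, α i ∈ U := by
    by_contra hno
    push_neg at hno
    have hallperp : ∀ i, ∀ x ∈ U, ⟪α i, x⟫ = 0 := by
      intro i
      rcases hdich i with h | h
      · exact absurd h (hno i)
      · exact h
    have huM : u ∈ M := hMeq ▸ hUle huU
    have : ⟪u, u⟫ = 0 := by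
      have haux : ∀ x ∈ M, ⟪x, u⟫ = 0 := by
        intro x hx
        induction hx using Submodule.span_induction with
        | mem x hx =>
          obtain ⟨j, rfl⟩ := hx
          exact hallperp j u huU
        | zero => simp
        | add x y _ _ ihx ihy => rw [inner_add_left, ihx, ihy, add_zero]
        | smul c x _ ihx => rw [inner_smul_left, ihx, mul_zero]
      exact haux u huM
    rw [inner_self_eq_zero] at this
    exact hu0 this
  obtain ⟨i1, hi1⟩ := hexU
  set F : Finset (Fin (n - 1)) := Finset.univ.filter (fun i => α i ∈ U) with hF
  have hFne : F.Nonempty := ⟨i1, by simp [hF, hi1]⟩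
  set i0 := F.min' hFne with hi0
  have hi0U : α i0 ∈ U := by
    have := F.min'_mem hFne
    simpa [hF] using this
  have hi0val : i0.val = 0 := by
    by_contra h0
    obtain ⟨j, hji, hjne⟩ := hconn i0 h0
    have hjF : j ∉ F := by
      intro hjF
      exact absurd (F.min'_le j hjF) (not_le.2 hji)
    have hjU : α j ∉ U := by simpa [hF] using hjF
    rcases hdich j with h | h
    · exact hjU h
    · exact hjne (h (α i0) hi0U)
  have hall : ∀ m : ℕ, ∀ i : Fin (n - 1), i.val = m → α i ∈ U := by
    intro m
    induction m using Nat.strong_induction_on with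
    | _ m IH =>
      intro i him
      by_cases h0 : i.val = 0
      · have : i = i0 := Fin.ext (by rw [h0, hi0val])
        rw [this]; exact hi0U
      · obtain ⟨j, hji, hjne⟩ := hconn i h0
        have hjU : α j ∈ U := IH j.val (by omega) j rfl
        rcases hdich i with h | h
        · exact h
        · exact absurd (inner_eq_zero_symm.1 (h (α j) hjU)) hjne
  have hMU : M ≤ U := by
    rw [hMdef, Submodule.span_le]
    rintro x ⟨i, rfl⟩
    exact hall i.val i rfl
  exact le_antisymm hUle (hMeq ▸ hMU)
end

section
/- Let V be a finite-dimensional complex vector space, 𝒜 a finite essential collection of hyperplanes in V, and for each H ∈ 𝒜 let α_H ∈ V* be a linear form with kernel H. Suppose 𝒜 is reducible, i.e., there is a decomposition V = V₁ ⊕ V₂ with V₁ ≠ 0 and V₂ ≠ 0 such that every H ∈ 𝒜 contains V₁ or contains V₂. Then the quadratic forms α_H² (H ∈ 𝒜) do not span the space of all quadratic forms on V; in particular, for any nonzero linear forms φ₁ vanishing on V₂ and φ₂ vanishing on V₁, the quadratic form φ₁·φ₂ is not a linear combination of the α_H². -/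
/-- Evaluation of the polar form of a quadratic form at a fixed pair, as a linear map. -/
noncomputable def polarEval {V : Type*} [AddCommGroup V] [Module ℂ V] (x y : V) :
    QuadraticForm ℂ V →ₗ[ℂ] ℂ where
  toFun Q := Q (x + y) - Q x - Q y
  map_add' Q Q' := by simp; ring
  map_smul' c Q := by simp [smul_eq_mul]; ring

/-- If a finite essential hyperplane arrangement `𝒜` in `V` is reducible
(there is `V = V₁ ⊕ V₂` with both summands nonzero such that each `H ∈ 𝒜` contains `V₁` or
`V₂`), then the squares `α_H²` of defining linear forms do not span the quadratic forms on
`V`; in particular for nonzero linear forms `φ₁` vanishing on `V₂` and `φ₂` vanishing on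
`V₁`, the quadratic form `φ₁·φ₂` is not a linear combination of the `α_H²`. -/
theorem stmt_8 {V : Type*} [AddCommGroup V] [Module ℂ V] [FiniteDimensional ℂ V]
    (𝒜 : Set (Submodule ℂ V)) (hfin : 𝒜.Finite)
    (hhyp : ∀ H ∈ 𝒜, ∃ f : V →ₗ[ℂ] ℂ, f ≠ 0 ∧ LinearMap.ker f = H)
    (hess : sInf 𝒜 = (⊥ : Submodule ℂ V))
    (α : Submodule ℂ V → (V →ₗ[ℂ] ℂ))
    (hα : ∀ H ∈ 𝒜, LinearMap.ker (α H) = H)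
    (V₁ V₂ : Submodule ℂ V) (hV₁ : V₁ ≠ ⊥) (hV₂ : V₂ ≠ ⊥) (hcompl : IsCompl V₁ V₂)
    (hred : ∀ H ∈ 𝒜, V₁ ≤ H ∨ V₂ ≤ H)
    (φ₁ φ₂ : V →ₗ[ℂ] ℂ) (hφ₁ : φ₁ ≠ 0) (hφ₂ : φ₂ ≠ 0)
    (hφ₁V₂ : V₂ ≤ LinearMap.ker φ₁) (hφ₂V₁ : V₁ ≤ LinearMap.ker φ₂) :
    Submodule.span ℂ
        {Q : QuadraticForm ℂ V | ∃ H ∈ 𝒜, Q = QuadraticMap.linMulLin (α H) (α H)} ≠ ⊤ ∧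
    QuadraticMap.linMulLin φ₁ φ₂ ∉ Submodule.span ℂ
        {Q : QuadraticForm ℂ V | ∃ H ∈ 𝒜, Q = QuadraticMap.linMulLin (α H) (α H)} := by
  -- find x₁ ∈ V₁ with φ₁ x₁ ≠ 0
  obtain ⟨x, hx⟩ : ∃ x, φ₁ x ≠ 0 := by
    by_contra h; push_neg at h
    exact hφ₁ (LinearMap.ext fun x => h x)
  obtain ⟨a, b, ha, hb, rfl⟩ := Submodule.codisjoint_iff_exists_add_eq.mp hcompl.codisjoint x
  have hb0 : φ₁ b = 0 := hφ₁V₂ hb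
  have hx₁ : φ₁ a ≠ 0 := by simpa [hb0] using hx
  obtain ⟨y, hy⟩ : ∃ y, φ₂ y ≠ 0 := by
    by_contra h; push_neg at h
    exact hφ₂ (LinearMap.ext fun x => h x)
  obtain ⟨c, d, hc, hd, rfl⟩ := Submodule.codisjoint_iff_exists_add_eq.mp hcompl.codisjoint y
  have hc0 : φ₂ c = 0 := hφ₂V₁ hc
  have hx₂ : φ₂ d ≠ 0 := by simpa [hc0] using hy
  set L := polarEval a d with hL
  have hgen : ∀ Q ∈ {Q : QuadraticForm ℂ V | ∃ H ∈ 𝒜, Q = QuadraticMap.linMulLin (α H) (α H)},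
      L Q = 0 := by
    rintro Q ⟨H, hH, rfl⟩
    have : α H a = 0 ∨ α H d = 0 := by
      rcases hred H hH with h1 | h2
      · left
        have : a ∈ LinearMap.ker (α H) := by rw [hα H hH]; exact h1 ha
        exact this
      · right
        have : d ∈ LinearMap.ker (α H) := by rw [hα H hH]; exact h2 hd
        exact this
    rcases this with h | h <;>
      simp [hL, polarEval, QuadraticMap.linMulLin_apply, h, map_add] <;> ring
  have hspan : Submodule.span ℂ
      {Q : QuadraticForm ℂ V | ∃ H ∈ 𝒜, Q = QuadraticMap.linMulLin (α H) (α H)} ≤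
      LinearMap.ker L := by
    rw [Submodule.span_le]
    intro Q hQ
    exact hgen Q hQ
  have hLφ : L (QuadraticMap.linMulLin φ₁ φ₂) ≠ 0 := by
    have hφ₁d : φ₁ d = 0 := hφ₁V₂ hd
    have hφ₂a : φ₂ a = 0 := hφ₂V₁ ha
    simp [hL, polarEval, QuadraticMap.linMulLin_apply, map_add, hφ₁d, hφ₂a]
    exact ⟨hx₁, hx₂⟩
  have hmem : QuadraticMap.linMulLin φ₁ φ₂ ∉ Submodule.span ℂ
      {Q : QuadraticForm ℂ V | ∃ H ∈ 𝒜, Q = QuadraticMap.linMulLin (α H) (α H)} := by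
    intro hmem
    exact hLφ (hspan hmem)
  refine ⟨?_, hmem⟩
  intro htop
  exact hmem (htop ▸ Submodule.mem_top)
end

section
/- Let W ⊆ GL(V) be a finite group generated by pseudo-reflections whose reflection arrangement 𝒜 is essential, and for each H ∈ 𝒜 let α_H ∈ V* be a linear form with kernel H. Then the quadratic forms α_H² (H ∈ 𝒜) span the space of all quadratic forms on V if and only if W acts irreducibly on V. -/
open Module

section Aux

variable {V : Type*} [AddCommGroup V] [Module ℂ V]

open LinearMap

/-- Two functionals, the second nonzero, with nested kernels are proportional. -/
lemma aux_prop_of_ker_le {f g : V →ₗ[ℂ] ℂ} (hg : g ≠ 0) (h : ker g ≤ ker f) :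
    ∃ c : ℂ, f = c • g := by
  obtain ⟨x₀, hx₀⟩ : ∃ x, g x ≠ 0 := by
    by_contra hc; push_neg at hc; exact hg (LinearMap.ext fun x => hc x)
  refine ⟨f x₀ / g x₀, LinearMap.ext fun x => ?_⟩
  have hk : x - (g x / g x₀) • x₀ ∈ ker g := by
    simp only [mem_ker, map_sub, map_smul, smul_eq_mul]
    field_simp
    ring
  have hf : f (x - (g x / g x₀) • x₀) = 0 := h hk
  simp only [map_sub, map_smul, smul_eq_mul, sub_eq_zero] at hf
  simp only [LinearMap.smul_apply, smul_eq_mul]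
  rw [hf]; ring

lemma aux_sx_sub_x (s : V ≃ₗ[ℂ] V) (x : V) :
    (((s : V →ₗ[ℂ] V) - LinearMap.id : V →ₗ[ℂ] V)) x = s x - x := by
  simp only [LinearMap.sub_apply, LinearMap.id_apply, LinearEquiv.coe_coe]

/-- Structure of a pseudo-reflection: given a functional `β` cutting out its hyperplane,
there is a "root" `e` with `s x = x + β x • e`. -/
lemma aux_refl_data (s : V ≃ₗ[ℂ] V) (hs : IsPseudoReflection s) (β : V →ₗ[ℂ] ℂ)
    (hβ : ker β = ker ((s : V →ₗ[ℂ] V) - LinearMap.id)) :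
    ∃ e : V, e ≠ 0 ∧ β e ≠ 0 ∧ ∀ x, s x = x + β x • e := by
  obtain ⟨hord, f, hf0, hfk⟩ := hs
  have hβ0 : β ≠ 0 := by
    intro h0
    apply hf0
    rw [← ker_eq_top, hfk, ← hβ, h0, ker_zero]
  obtain ⟨x₀, hx₀⟩ : ∃ x, β x ≠ 0 := by
    by_contra hc; push_neg at hc; exact hβ0 (LinearMap.ext fun x => hc x)
  set e : V := (β x₀)⁻¹ • (s x₀ - x₀) with he_def
  have key : ∀ x, s x = x + β x • e := by
    intro x
    have hy : β (x - (β x * (β x₀)⁻¹) • x₀) = 0 := by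
      simp only [map_sub, map_smul, smul_eq_mul]
      field_simp
      ring
    have hy2 : x - (β x * (β x₀)⁻¹) • x₀ ∈ ker ((s : V →ₗ[ℂ] V) - LinearMap.id) := by
      rw [← hβ]; exact hy
    rw [mem_ker, aux_sx_sub_x, sub_eq_zero] at hy2
    have hlin : s (x - (β x * (β x₀)⁻¹) • x₀) = s x - (β x * (β x₀)⁻¹) • s x₀ := by
      simp [map_sub, map_smul]
    rw [hlin] at hy2
    have : s x = x - (β x * (β x₀)⁻¹) • x₀ + (β x * (β x₀)⁻¹) • s x₀ := by
      rw [← hy2]; abel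
    rw [this, he_def]
    module
  have he0 : e ≠ 0 := by
    intro h0
    apply hx₀
    have : s x₀ = x₀ := by rw [key x₀, h0, smul_zero, add_zero]
    have hker : x₀ ∈ ker ((s : V →ₗ[ℂ] V) - LinearMap.id) := by
      rw [mem_ker, aux_sx_sub_x, this, sub_self]
    rw [← hβ] at hker
    exact hker
  refine ⟨e, he0, ?_, key⟩
  intro hβe
  obtain ⟨n, hn, hsn⟩ := isOfFinOrder_iff_pow_eq_one.mp hord
  have hpow : ∀ k : ℕ, (s ^ k) x₀ = x₀ + ((k : ℂ) * β x₀) • e := by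
    intro k
    induction k with
    | zero => simp
    | succ k ih =>
      have : s ^ (k + 1) = s * s ^ k := by rw [pow_succ']
      rw [this]
      show s ((s ^ k) x₀) = _
      rw [ih, key]
      have : β (x₀ + ((k : ℂ) * β x₀) • e) = β x₀ := by
        simp [map_add, map_smul, hβe]
      rw [this]
      push_cast
      module
  have := hpow n
  rw [hsn] at this
  rw [show ((1 : V ≃ₗ[ℂ] V) x₀) = x₀ from rfl] at this
  have h0 : ((n : ℂ) * β x₀) • e = 0 := by
    have := this.symm
    rwa [add_eq_left] at this
  rcases smul_eq_zero.mp h0 with h | h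
  · exact (mul_ne_zero (Nat.cast_ne_zero.mpr hn.ne') hx₀) h
  · exact he0 h

/-- The inverse of a pseudo-reflection is one, with the same hyperplane. -/
lemma aux_inv_pr {s : V ≃ₗ[ℂ] V} (hs : IsPseudoReflection s) :
    IsPseudoReflection s⁻¹ ∧
      ker (((s⁻¹ : V ≃ₗ[ℂ] V) : V →ₗ[ℂ] V) - LinearMap.id)
        = ker ((s : V →ₗ[ℂ] V) - LinearMap.id) := by
  have hker : ker (((s⁻¹ : V ≃ₗ[ℂ] V) : V →ₗ[ℂ] V) - LinearMap.id)
      = ker ((s : V →ₗ[ℂ] V) - LinearMap.id) := by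
    ext x
    simp only [mem_ker, aux_sx_sub_x, sub_eq_zero]
    show s.symm x = x ↔ _
    constructor
    · intro h
      have := congrArg s h
      rw [s.apply_symm_apply] at this
      exact this.symm
    · intro h
      have := congrArg s.symm h
      rw [s.symm_apply_apply] at this
      exact this.symm
  obtain ⟨hord, f, hf0, hfk⟩ := hs
  exact ⟨⟨hord.inv, f, hf0, by rw [hfk, hker]⟩, hker⟩

end Aux
section Aux2

variable {V : Type*} [AddCommGroup V] [Module ℂ V]

open LinearMap

lemma aux_mem_arr_ne_top {W : Subgroup (V ≃ₗ[ℂ] V)} {H : Submodule ℂ V}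
    (hH : H ∈ reflArrangement W) : H ≠ ⊤ := by
  obtain ⟨s, _, ⟨_, f, hf0, hfk⟩, hk⟩ := hH
  intro h
  apply hf0
  rw [← ker_eq_top, hfk, hk, h]

lemma aux_mul_apply (g h : V ≃ₗ[ℂ] V) (x : V) : (g * h) x = g (h x) := rfl

lemma aux_conj_fix (w s : V ≃ₗ[ℂ] V) (x : V) :
    (w⁻¹ * s * w) x = x ↔ s (w x) = w x := by
  rw [aux_mul_apply, aux_mul_apply]
  constructor
  · intro h
    have h2 := congrArg w h
    rwa [show w (w⁻¹ (s (w x))) = s (w x) from w.apply_symm_apply _] at h2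
  · intro h
    rw [h]
    exact w.symm_apply_apply x

lemma aux_comap_mem {W : Subgroup (V ≃ₗ[ℂ] V)} {H : Submodule ℂ V}
    (hH : H ∈ reflArrangement W) {w : V ≃ₗ[ℂ] V} (hw : w ∈ W) :
    Submodule.comap (w : V →ₗ[ℂ] V) H ∈ reflArrangement W := by
  obtain ⟨s, hsW, hspr, hk⟩ := hH
  refine ⟨w⁻¹ * s * w, mul_mem (mul_mem (inv_mem hw) hsW) hw, ?_, ?_⟩
  · constructor
    · have : w⁻¹ * s * w = (MulAut.conj w⁻¹) s := by
        rw [MulAut.conj_apply, inv_inv]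
      rw [this]
      exact (MulAut.conj w⁻¹).toMonoidHom.isOfFinOrder hspr.1
    · obtain ⟨_, f, hf0, hfk⟩ := hspr
      refine ⟨f.comp (w : V →ₗ[ℂ] V), ?_, ?_⟩
      · intro h0
        apply hf0
        ext x
        have := LinearMap.ext_iff.mp h0 (w.symm x)
        simpa using this
      · rw [ker_comp, hfk]
        ext x
        simp only [Submodule.mem_comap, mem_ker, aux_sx_sub_x, sub_eq_zero,
          LinearEquiv.coe_coe]
        exact (aux_conj_fix w s x).symm
  · ext x
    simp only [Submodule.mem_comap, mem_ker, aux_sx_sub_x, sub_eq_zero, LinearEquiv.coe_coe]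
    rw [aux_conj_fix w s x, ← hk, mem_ker, aux_sx_sub_x, sub_eq_zero]

/-- The "edge" relation on the reflection arrangement: there is a reflection over `H`
moving some vector out of `L`. -/
def ArrEdge (W : Subgroup (V ≃ₗ[ℂ] V)) (H L : Submodule ℂ V) : Prop :=
  H ∈ reflArrangement W ∧ L ∈ reflArrangement W ∧
    ∃ s ∈ W, IsPseudoReflection s ∧ LinearMap.ker ((s : V →ₗ[ℂ] V) - LinearMap.id) = H ∧
      ∃ x : V, s x - x ∉ L

lemma aux_reach {W : Subgroup (V ≃ₗ[ℂ] V)}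
    (hgen : W = Subgroup.closure {s : V ≃ₗ[ℂ] V | s ∈ W ∧ IsPseudoReflection s})
    (hirr : ∀ U : Submodule ℂ V,
      (∀ w ∈ W, Submodule.map (w : V →ₗ[ℂ] V) U ≤ U) → U = ⊥ ∨ U = ⊤)
    {H K : Submodule ℂ V} (hH : H ∈ reflArrangement W) (hK : K ∈ reflArrangement W) :
    Relation.ReflTransGen (ArrEdge W) H K := by
  classical
  set gS : Set V := {y | ∃ s, s ∈ W ∧ IsPseudoReflection s ∧
      Relation.ReflTransGen (ArrEdge W) H (LinearMap.ker ((s : V →ₗ[ℂ] V) - LinearMap.id)) ∧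
      ∃ x, y = s x - x} with hgS
  set U : Submodule ℂ V := Submodule.span ℂ gS with hU
  -- U is nonzero
  have hUne : U ≠ ⊥ := by
    have hHtop : H ≠ ⊤ := aux_mem_arr_ne_top hH
    obtain ⟨s₀, hs₀W, hs₀pr, hk₀⟩ := hH
    obtain ⟨x, hx⟩ : ∃ x, x ∉ H := by
      by_contra hc; push_neg at hc
      exact hHtop (Submodule.eq_top_iff'.mpr hc)
    have hy0 : s₀ x - x ≠ 0 := by
      intro h0
      apply hx
      rw [← hk₀, mem_ker, aux_sx_sub_x, h0]
    have hy : s₀ x - x ∈ gS := ⟨s₀, hs₀W, hs₀pr, by rw [hk₀], x, rfl⟩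
    intro hb
    apply hy0
    have : s₀ x - x ∈ U := Submodule.subset_span hy
    rwa [hb, Submodule.mem_bot] at this
  -- U is stable under each pseudo-reflection of W
  have hstepU : ∀ t : V ≃ₗ[ℂ] V, t ∈ W → IsPseudoReflection t →
      Submodule.map (t : V →ₗ[ℂ] V) U ≤ U := by
    intro t htW htpr
    obtain ⟨-, f, hf0, hfk⟩ := id htpr
    obtain ⟨e, he0, hfe, hkey⟩ := aux_refl_data t htpr f hfk
    have hLA : LinearMap.ker ((t : V →ₗ[ℂ] V) - LinearMap.id) ∈ reflArrangement W :=
      ⟨t, htW, htpr, rfl⟩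
    have het_mem : Relation.ReflTransGen (ArrEdge W) H
        (LinearMap.ker ((t : V →ₗ[ℂ] V) - LinearMap.id)) → e ∈ U := by
      intro hRL
      obtain ⟨x₁, hx₁⟩ : ∃ x, f x ≠ 0 := by
        by_contra hc; push_neg at hc; exact hf0 (LinearMap.ext fun x => hc x)
      have h1 : t x₁ - x₁ = f x₁ • e := by rw [hkey x₁]; abel
      have h2 : e = (f x₁)⁻¹ • (t x₁ - x₁) := by
        rw [h1, smul_smul, inv_mul_cancel₀ hx₁, one_smul]
      rw [h2]
      exact Submodule.smul_mem _ _ (Submodule.subset_span ⟨t, htW, htpr, hRL, x₁, rfl⟩)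
    rw [hU, Submodule.map_span_le]
    rintro y ⟨s, hsW, hspr, hreach, x, rfl⟩
    have hty : t (s x - x) = (s x - x) + f (s x - x) • e := hkey _
    rw [show ((t : V →ₗ[ℂ] V) (s x - x)) = t (s x - x) from rfl]
    by_cases hf : f (s x - x) = 0
    · rw [hty, hf, zero_smul, add_zero]
      exact Submodule.subset_span ⟨s, hsW, hspr, hreach, x, rfl⟩
    · have hnotL : s x - x ∉ LinearMap.ker ((t : V →ₗ[ℂ] V) - LinearMap.id) := by
        rw [← hfk]
        simpa [mem_ker] using hf
      have hedge : ArrEdge W (LinearMap.ker ((s : V →ₗ[ℂ] V) - LinearMap.id))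
          (LinearMap.ker ((t : V →ₗ[ℂ] V) - LinearMap.id)) :=
        ⟨⟨s, hsW, hspr, rfl⟩, hLA, s, hsW, hspr, rfl, x, hnotL⟩
      have hRL := hreach.tail hedge
      rw [hty]
      exact add_mem (Submodule.subset_span ⟨s, hsW, hspr, hreach, x, rfl⟩)
        (Submodule.smul_mem _ _ (het_mem hRL))
  -- U is stable under all of W
  have hallw : ∀ w ∈ W, Submodule.map ((w : V ≃ₗ[ℂ] V) : V →ₗ[ℂ] V) U ≤ U := by
    intro w hw
    rw [hgen] at hw
    refine (Subgroup.closure_induction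
      (p := fun g _ => Submodule.map ((g : V ≃ₗ[ℂ] V) : V →ₗ[ℂ] V) U ≤ U ∧
        Submodule.map ((g⁻¹ : V ≃ₗ[ℂ] V) : V →ₗ[ℂ] V) U ≤ U)
      ?_ ?_ ?_ ?_ hw).1
    · rintro x ⟨hxW, hxpr⟩
      exact ⟨hstepU x hxW hxpr, hstepU x⁻¹ (inv_mem hxW) (aux_inv_pr hxpr).1⟩
    · have h1 : Submodule.map ((1 : V ≃ₗ[ℂ] V) : V →ₗ[ℂ] V) U ≤ U := by
        rw [LinearEquiv.coe_toLinearMap_one, Submodule.map_id]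
      exact ⟨h1, by rw [inv_one]; exact h1⟩
    · intro x y _ _ hx hy
      constructor
      · rw [LinearEquiv.coe_toLinearMap_mul, Module.End.mul_eq_comp, Submodule.map_comp]
        exact le_trans (Submodule.map_mono hy.1) hx.1
      · rw [mul_inv_rev, LinearEquiv.coe_toLinearMap_mul, Module.End.mul_eq_comp,
          Submodule.map_comp]
        exact le_trans (Submodule.map_mono hx.2) hy.2
    · intro x _ hx
      exact ⟨hx.2, by rw [inv_inv]; exact hx.1⟩
  have hUtop : U = ⊤ := (hirr U (fun w hw => hallw w hw)).resolve_left hUne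
  -- conclude
  have hKtop : K ≠ ⊤ := aux_mem_arr_ne_top hK
  obtain ⟨y, hygS, hyK⟩ : ∃ y ∈ gS, y ∉ K := by
    by_contra hc
    push_neg at hc
    apply hKtop
    have : U ≤ K := Submodule.span_le.mpr hc
    rw [hUtop] at this
    exact top_le_iff.mp this
  obtain ⟨s, hsW, hspr, hreach, x, rfl⟩ := hygS
  exact hreach.tail ⟨⟨s, hsW, hspr, rfl⟩, hK, s, hsW, hspr, rfl, x, hyK⟩

end Aux2
section Aux3

variable {V : Type*} [AddCommGroup V] [Module ℂ V]

open LinearMap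

lemma aux_sep_dual [FiniteDimensional ℂ V] {x y : V} (h : x ∉ Submodule.span ℂ {y}) :
    ∃ f : V →ₗ[ℂ] ℂ, f x = 1 ∧ f y = 0 := by
  set p := Submodule.span ℂ {y} with hp
  have hx : p.mkQ x ≠ 0 := by
    intro h0
    apply h
    rwa [Submodule.mkQ_apply, Submodule.Quotient.mk_eq_zero] at h0
  obtain ⟨φ, hφ⟩ : ∃ φ : Module.Dual ℂ (V ⧸ p), φ (p.mkQ x) ≠ 0 := by
    by_contra hc
    push_neg at hc
    exact hx ((Module.forall_dual_apply_eq_zero_iff ℂ _).mp hc)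
  refine ⟨(φ (p.mkQ x))⁻¹ • (φ ∘ₗ p.mkQ), ?_, ?_⟩
  · simp only [LinearMap.smul_apply, LinearMap.comp_apply, smul_eq_mul]
    exact inv_mul_cancel₀ hφ
  · have hy : p.mkQ y = 0 := by
      rw [Submodule.mkQ_apply, Submodule.Quotient.mk_eq_zero]
      exact Submodule.mem_span_singleton_self y
    simp [hy]

end Aux3

/-- For a finite pseudo-reflection group `W` with essential reflection
arrangement `𝒜` and `α_H` a linear form with kernel `H` for each `H ∈ 𝒜`, the
quadratic forms `α_H²` span the quadratic forms on `V` if and only if `W` acts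
irreducibly on `V`. -/
theorem stmt_10 {V : Type*} [AddCommGroup V] [Module ℂ V] [FiniteDimensional ℂ V] [Nontrivial V]
    (W : Subgroup (V ≃ₗ[ℂ] V)) (hfin : (W : Set (V ≃ₗ[ℂ] V)).Finite)
    (hgen : W = Subgroup.closure {s : V ≃ₗ[ℂ] V | s ∈ W ∧ IsPseudoReflection s})
    (hess : sInf (reflArrangement W) = (⊥ : Submodule ℂ V))
    (α : Submodule ℂ V → (V →ₗ[ℂ] ℂ))
    (hα : ∀ H ∈ reflArrangement W, LinearMap.ker (α H) = H) :
    Submodule.span ℂ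
        {Q : QuadraticForm ℂ V |
          ∃ H ∈ reflArrangement W, Q = QuadraticMap.linMulLin (α H) (α H)} = ⊤ ↔
      ∀ U : Submodule ℂ V,
        (∀ w ∈ W, Submodule.map (w : V →ₗ[ℂ] V) U ≤ U) → U = ⊥ ∨ U = ⊤ := by
  classical
  constructor
  · -- squares span ⟹ irreducible
    intro hspan U hU
    by_contra hcon
    push_neg at hcon
    obtain ⟨hUbot, hUtop⟩ := hcon
    haveI : Fintype ↥W := hfin.fintype
    obtain ⟨C, hC⟩ := Submodule.exists_isCompl U
    set π₀ : V →ₗ[ℂ] V := U.subtype ∘ₗ (U.projectionOnto C hC) with hπ₀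
    have hπ₀U : ∀ x, π₀ x ∈ U := fun x => (U.projectionOnto C hC x).2
    have hπ₀id : ∀ u ∈ U, π₀ u = u := by
      intro u hu
      have := Submodule.linearProjOfIsCompl_apply_left hC ⟨u, hu⟩
      simp only [hπ₀, LinearMap.comp_apply]
      rw [show ((⟨u, hu⟩ : U) : V) = u from rfl] at this
      rw [this]
      rfl
    set π : V →ₗ[ℂ] V :=
      ∑ w : W, (((w : V ≃ₗ[ℂ] V) : V →ₗ[ℂ] V) ∘ₗ π₀) ∘ₗ
        (((w⁻¹ : W) : V ≃ₗ[ℂ] V) : V →ₗ[ℂ] V) with hπ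
    have hπ_apply : ∀ x, π x =
        ∑ w : W, (w : V ≃ₗ[ℂ] V) (π₀ (((w⁻¹ : W) : V ≃ₗ[ℂ] V) x)) := by
      intro x
      rw [hπ, LinearMap.sum_apply]
      exact Finset.sum_congr rfl fun w _ => rfl
    have hπU : ∀ x, π x ∈ U := by
      intro x
      rw [hπ_apply]
      refine Submodule.sum_mem _ fun w _ => ?_
      exact hU (w : V ≃ₗ[ℂ] V) w.2 ⟨π₀ _, hπ₀U _, rfl⟩
    have card0 : (Fintype.card W : ℂ) ≠ 0 := Nat.cast_ne_zero.mpr Fintype.card_ne_zero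
    have hπid : ∀ u ∈ U, π u = (Fintype.card W : ℂ) • u := by
      intro u hu
      rw [hπ_apply]
      have key : ∀ w : W, (w : V ≃ₗ[ℂ] V) (π₀ (((w⁻¹ : W) : V ≃ₗ[ℂ] V) u)) = u := by
        intro w
        have h1 : ((w⁻¹ : W) : V ≃ₗ[ℂ] V) u ∈ U := hU _ (w⁻¹).2 ⟨u, hu, rfl⟩
        rw [hπ₀id _ h1]
        rw [show (((w⁻¹ : W) : V ≃ₗ[ℂ] V) : V → V) u = ((w : V ≃ₗ[ℂ] V))⁻¹ u by
          rw [← Subgroup.coe_inv]]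
        rw [show ((w : V ≃ₗ[ℂ] V) (((w : V ≃ₗ[ℂ] V))⁻¹ u))
            = (((w : V ≃ₗ[ℂ] V)) * ((w : V ≃ₗ[ℂ] V))⁻¹) u from rfl]
        rw [mul_inv_cancel]
        rfl
      rw [Finset.sum_congr rfl fun w _ => key w, Finset.sum_const, Finset.card_univ]
      rw [← Nat.cast_smul_eq_nsmul ℂ]
    have hcomm : ∀ (w : W) (x : V), π ((w : V ≃ₗ[ℂ] V) x) = (w : V ≃ₗ[ℂ] V) (π x) := by
      intro w₀ x
      rw [hπ_apply, hπ_apply, map_sum]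
      refine (Fintype.sum_equiv (Equiv.mulLeft w₀)
        (fun w => (w₀ : V ≃ₗ[ℂ] V) ((w : V ≃ₗ[ℂ] V) (π₀ (((w⁻¹ : W) : V ≃ₗ[ℂ] V) x))))
        (fun w => (w : V ≃ₗ[ℂ] V) (π₀ (((w⁻¹ : W) : V ≃ₗ[ℂ] V) ((w₀ : V ≃ₗ[ℂ] V) x))))
        ?_).symm
      intro w
      simp only [Equiv.coe_mulLeft, mul_inv_rev, Subgroup.coe_mul, Subgroup.coe_inv]
      rw [aux_mul_apply, aux_mul_apply]
      congr 2
      rw [show (((w₀ : V ≃ₗ[ℂ] V))⁻¹ ((w₀ : V ≃ₗ[ℂ] V) x)) = x from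
        (w₀ : V ≃ₗ[ℂ] V).symm_apply_apply x]
    set U' := LinearMap.ker π with hU'
    have hUU' : ∀ u, u ∈ U → u ∈ U' → u = 0 := by
      intro u hu hk
      have h1 := hπid u hu
      rw [LinearMap.mem_ker.mp hk] at h1
      exact (smul_eq_zero.mp h1.symm).resolve_left card0
    have hU'ne : U' ≠ ⊥ := by
      intro h0
      apply hUtop
      rw [eq_top_iff]
      intro x _
      have hy : (Fintype.card W : ℂ) • x - π x ∈ U' := by
        rw [hU', LinearMap.mem_ker, map_sub, map_smul, hπid _ (hπU x), sub_self]
      rw [h0, Submodule.mem_bot, sub_eq_zero] at hy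
      have hmem : (Fintype.card W : ℂ) • x ∈ U := hy ▸ hπU x
      exact (Submodule.smul_mem_iff U card0).mp hmem
    obtain ⟨z, hzU', hz0⟩ := (Submodule.ne_bot_iff _).mp hU'ne
    obtain ⟨u, huU, hu0⟩ := (Submodule.ne_bot_iff _).mp hUbot
    have hdich : ∀ H ∈ reflArrangement W, α H u = 0 ∨ α H z = 0 := by
      intro H hH
      by_cases h : α H u = 0
      · exact Or.inl h
      right
      have hαH := hα H hH
      obtain ⟨s, hsW, hspr, hk⟩ := hH
      obtain ⟨e, he0, heα, hkey⟩ := aux_refl_data s hspr (α H) (by rw [hαH, ← hk])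
      have hsu : s u - u = α H u • e := by rw [hkey u]; abel
      have heU : e ∈ U := by
        have h1 : s u ∈ U := hU s hsW ⟨u, huU, rfl⟩
        have h2 : s u - u ∈ U := sub_mem h1 huU
        rw [hsu] at h2
        have h3 := Submodule.smul_mem U (α H u)⁻¹ h2
        rwa [smul_smul, inv_mul_cancel₀ h, one_smul] at h3
      have hsz : s z - z ∈ U' := by
        have h1 : π (s z) = s (π z) := hcomm ⟨s, hsW⟩ z
        have hz : π z = 0 := hzU'
        rw [hU', LinearMap.mem_ker, map_sub, h1, hz, map_zero, sub_self]
      have hsz2 : s z - z = α H z • e := by rw [hkey z]; abel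
      rw [hsz2] at hsz
      have h0 : α H z • e = 0 := hUU' _ (Submodule.smul_mem U _ heU) hsz
      exact (smul_eq_zero.mp h0).resolve_right he0
    have hzU : z ∉ U := fun hzUmem => hz0 (hUU' z hzUmem hzU')
    have hzsu : z ∉ Submodule.span ℂ {u} := fun h =>
      hzU ((Submodule.span_singleton_le_iff_mem u U).mpr huU h)
    have husz : u ∉ Submodule.span ℂ {z} := by
      intro h
      obtain ⟨c, hc⟩ := Submodule.mem_span_singleton.mp h
      have hc0 : c ≠ 0 := by
        rintro rfl
        rw [zero_smul] at hc
        exact hu0 hc.symm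
      apply hzU
      have hz : z = c⁻¹ • u := by rw [← hc, smul_smul, inv_mul_cancel₀ hc0, one_smul]
      rw [hz]
      exact Submodule.smul_mem U _ huU
    obtain ⟨lam, hlam1, hlam0⟩ := aux_sep_dual husz
    obtain ⟨mu, hmu1, hmu0⟩ := aux_sep_dual hzsu
    set φ : QuadraticForm ℂ V →ₗ[ℂ] ℂ :=
      { toFun := fun Q => Q (u + z) - Q u - Q z
        map_add' := by
          intro Q Q'
          simp only [QuadraticMap.add_apply]
          ring
        map_smul' := by
          intro c Q
          simp only [QuadraticMap.smul_apply, smul_eq_mul, RingHom.id_apply]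
          ring } with hφ
    have hφgen : ∀ Q ∈ {Q : QuadraticForm ℂ V |
        ∃ H ∈ reflArrangement W, Q = QuadraticMap.linMulLin (α H) (α H)}, φ Q = 0 := by
      rintro Q ⟨H, hH, rfl⟩
      show (QuadraticMap.linMulLin (α H) (α H)) (u + z)
          - (QuadraticMap.linMulLin (α H) (α H)) u
          - (QuadraticMap.linMulLin (α H) (α H)) z = 0
      simp only [QuadraticMap.linMulLin_apply, map_add]
      rcases hdich H hH with h | h <;> rw [h] <;> ring
    have hker : Submodule.span ℂ {Q : QuadraticForm ℂ V |
        ∃ H ∈ reflArrangement W, Q = QuadraticMap.linMulLin (α H) (α H)}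
          ≤ LinearMap.ker φ :=
      Submodule.span_le.mpr fun Q hQ => LinearMap.mem_ker.mpr (hφgen Q hQ)
    rw [hspan] at hker
    have hQ0 : φ (QuadraticMap.linMulLin lam mu) = 0 :=
      LinearMap.mem_ker.mp (hker Submodule.mem_top)
    have hQ1 : φ (QuadraticMap.linMulLin lam mu) = 1 := by
      show (QuadraticMap.linMulLin lam mu) (u + z)
          - (QuadraticMap.linMulLin lam mu) u - (QuadraticMap.linMulLin lam mu) z = 1
      simp only [QuadraticMap.linMulLin_apply, map_add, hlam1, hlam0, hmu1, hmu0]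
      ring
    rw [hQ0] at hQ1
    exact zero_ne_one hQ1
  · -- irreducible ⟹ squares span
    intro hirr
    set S := Submodule.span ℂ {Q : QuadraticForm ℂ V |
      ∃ H ∈ reflArrangement W, Q = QuadraticMap.linMulLin (α H) (α H)} with hSdef
    show S = ⊤
    have mm : ∀ H ∈ reflArrangement W, QuadraticMap.linMulLin (α H) (α H) ∈ S :=
      fun H hH => Submodule.subset_span ⟨H, hH, rfl⟩
    have hαne : ∀ H ∈ reflArrangement W, α H ≠ 0 := by
      intro H hH h0
      apply aux_mem_arr_ne_top hH
      rw [← hα H hH, h0, LinearMap.ker_zero]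
    -- S is stable under W
    have hstable : ∀ w : V ≃ₗ[ℂ] V, w ∈ W → ∀ Q : QuadraticForm ℂ V, Q ∈ S →
        Q.comp ((w : V ≃ₗ[ℂ] V) : V →ₗ[ℂ] V) ∈ S := by
      intro w hw Q hQ
      induction hQ using Submodule.span_induction with
      | mem Q hQm =>
        obtain ⟨H, hH, rfl⟩ := hQm
        have hH' : Submodule.comap ((w : V ≃ₗ[ℂ] V) : V →ₗ[ℂ] V) H ∈ reflArrangement W :=
          aux_comap_mem hH hw
        set H' := Submodule.comap ((w : V ≃ₗ[ℂ] V) : V →ₗ[ℂ] V) H with hH'def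
        have hne' : α H' ≠ 0 := hαne H' hH'
        have hkk : LinearMap.ker (α H')
            ≤ LinearMap.ker ((α H).comp ((w : V ≃ₗ[ℂ] V) : V →ₗ[ℂ] V)) := by
          rw [hα H' hH', LinearMap.ker_comp, hα H hH]
        obtain ⟨c, hc⟩ := aux_prop_of_ker_le hne' hkk
        have hcx : ∀ x, α H (w x) = c * α H' x := by
          intro x
          have h1 := LinearMap.ext_iff.mp hc x
          simpa using h1
        have key : (QuadraticMap.linMulLin (α H) (α H)).comp ((w : V ≃ₗ[ℂ] V) : V →ₗ[ℂ] V)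
            = (c * c) • QuadraticMap.linMulLin (α H') (α H') := by
          ext x
          simp only [QuadraticMap.comp_apply, QuadraticMap.linMulLin_apply,
            QuadraticMap.smul_apply, smul_eq_mul, LinearEquiv.coe_coe, hcx]
          ring
        rw [key]
        exact Submodule.smul_mem _ _ (mm H' hH')
      | zero =>
        have h0 : (0 : QuadraticForm ℂ V).comp ((w : V ≃ₗ[ℂ] V) : V →ₗ[ℂ] V) = 0 := by
          ext x
          simp [QuadraticMap.comp_apply]
        rw [h0]
        exact zero_mem _
      | add Q Q' hQ1 hQ2 ih1 ih2 =>
        have hadd : (Q + Q').comp ((w : V ≃ₗ[ℂ] V) : V →ₗ[ℂ] V)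
            = Q.comp ((w : V ≃ₗ[ℂ] V) : V →ₗ[ℂ] V)
              + Q'.comp ((w : V ≃ₗ[ℂ] V) : V →ₗ[ℂ] V) := by
          ext x
          simp [QuadraticMap.comp_apply, QuadraticMap.add_apply]
        rw [hadd]
        exact add_mem ih1 ih2
      | smul c Q hQ1 ih =>
        have hsmul : (c • Q).comp ((w : V ≃ₗ[ℂ] V) : V →ₗ[ℂ] V)
            = c • Q.comp ((w : V ≃ₗ[ℂ] V) : V →ₗ[ℂ] V) := by
          ext x
          simp [QuadraticMap.comp_apply, QuadraticMap.smul_apply]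
        rw [hsmul]
        exact Submodule.smul_mem _ _ ih
    -- edge data
    have hedge_data : ∀ {Hh L : Submodule ℂ V}, ArrEdge W Hh L →
        ∃ s : V ≃ₗ[ℂ] V, s ∈ W ∧ ∃ e : V, α L e ≠ 0 ∧
          (∀ γ : V →ₗ[ℂ] ℂ, ∀ x, γ (s x) = γ x + α Hh x * γ e) := by
      rintro Hh L ⟨hHh, hL, s, hsW, hspr, hk, x, hx⟩
      obtain ⟨e, he0, heα, hkey⟩ := aux_refl_data s hspr (α Hh) (by rw [hα Hh hHh, ← hk])
      have hsx : s x - x = α Hh x • e := by rw [hkey x]; abel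
      have heL : α L e ≠ 0 := by
        intro h0
        apply hx
        rw [← hα L hL, LinearMap.mem_ker, hsx, map_smul, h0, smul_zero]
      refine ⟨s, hsW, e, heL, ?_⟩
      intro γ y
      rw [hkey y]
      simp only [map_add, map_smul, smul_eq_mul]
    -- products along edges
    have hedge_prod : ∀ {Hh L : Submodule ℂ V}, ArrEdge W Hh L →
        QuadraticMap.linMulLin (α L) (α Hh) ∈ S := by
      intro Hh L hE
      obtain ⟨hHh, hL, -⟩ := id hE
      obtain ⟨s, hsW, e, ha, hcomp⟩ := hedge_data hE
      have Pc := hstable s hsW _ (mm L hL)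
      set a := α L e with hadef
      have key : (2 * a) • QuadraticMap.linMulLin (α L) (α Hh)
          = (QuadraticMap.linMulLin (α L) (α L)).comp ((s : V ≃ₗ[ℂ] V) : V →ₗ[ℂ] V)
            - QuadraticMap.linMulLin (α L) (α L)
            - (a * a) • QuadraticMap.linMulLin (α Hh) (α Hh) := by
        ext x
        simp only [QuadraticMap.smul_apply, QuadraticMap.sub_apply,
          QuadraticMap.comp_apply, QuadraticMap.linMulLin_apply, smul_eq_mul,
          LinearEquiv.coe_coe]
        rw [hcomp (α L) x]
        ring
      have h1 : (2 * a) • QuadraticMap.linMulLin (α L) (α Hh) ∈ S := by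
        rw [key]
        exact sub_mem (sub_mem Pc (mm L hL)) (Submodule.smul_mem _ _ (mm Hh hHh))
      exact (Submodule.smul_mem_iff S (mul_ne_zero two_ne_zero ha)).mp h1
    -- induction step along a path
    have hstep_prod : ∀ {Hh L K : Submodule ℂ V}, ArrEdge W Hh L → K ∈ reflArrangement W →
        QuadraticMap.linMulLin (α L) (α K) ∈ S →
        QuadraticMap.linMulLin (α Hh) (α K) ∈ S := by
      intro Hh L K hE hK hQ'
      obtain ⟨hHh, hL, -⟩ := id hE
      obtain ⟨s, hsW, e, ha, hcomp⟩ := hedge_data hE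
      have Qc := hstable s hsW _ hQ'
      set a := α L e with hadef
      set b := α K e with hbdef
      have key : a • QuadraticMap.linMulLin (α Hh) (α K)
          = (QuadraticMap.linMulLin (α L) (α K)).comp ((s : V ≃ₗ[ℂ] V) : V →ₗ[ℂ] V)
            - QuadraticMap.linMulLin (α L) (α K)
            - b • QuadraticMap.linMulLin (α L) (α Hh)
            - (a * b) • QuadraticMap.linMulLin (α Hh) (α Hh) := by
        ext x
        simp only [QuadraticMap.smul_apply, QuadraticMap.sub_apply,
          QuadraticMap.comp_apply, QuadraticMap.linMulLin_apply, smul_eq_mul,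
          LinearEquiv.coe_coe]
        rw [hcomp (α L) x, hcomp (α K) x]
        ring
      have h1 : a • QuadraticMap.linMulLin (α Hh) (α K) ∈ S := by
        rw [key]
        exact sub_mem (sub_mem (sub_mem Qc hQ')
          (Submodule.smul_mem _ _ (hedge_prod hE))) (Submodule.smul_mem _ _ (mm Hh hHh))
      exact (Submodule.smul_mem_iff S ha).mp h1
    -- all products of pairs of α's
    have hall : ∀ H ∈ reflArrangement W, ∀ K ∈ reflArrangement W,
        QuadraticMap.linMulLin (α H) (α K) ∈ S := by
      intro H hH K hK
      have hreach := aux_reach hgen hirr hH hK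
      clear hH
      induction hreach using Relation.ReflTransGen.head_induction_on with
      | refl => exact mm K hK
      | head h' _ ih => exact hstep_prod h' hK ih
    -- the α's span the dual space
    have hZ : Submodule.span ℂ {f : V →ₗ[ℂ] ℂ | ∃ H ∈ reflArrangement W, f = α H} = ⊤ := by
      set Z := Submodule.span ℂ {f : V →ₗ[ℂ] ℂ | ∃ H ∈ reflArrangement W, f = α H}
        with hZdef
      have hco : Z.dualCoannihilator = ⊥ := by
        rw [← hess]
        ext x
        rw [show (x ∈ Z.dualCoannihilator) ↔ x ∈ (Z.dualCoannihilator : Set V) from Iff.rfl]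
        rw [hZdef, Submodule.coe_dualCoannihilator_span]
        simp only [Set.mem_setOf_eq, Submodule.mem_sInf]
        constructor
        · intro h H hH
          rw [← hα H hH, LinearMap.mem_ker]
          exact h (α H) ⟨H, hH, rfl⟩
        · rintro h f ⟨H, hH, rfl⟩
          have hx : x ∈ H := h H hH
          rw [← hα H hH, LinearMap.mem_ker] at hx
          exact hx
      have hda : Z.dualCoannihilator.dualAnnihilator = Z :=
        Subspace.dualCoannihilator_dualAnnihilator_eq
      rw [hco] at hda
      rw [← hda, Submodule.dualAnnihilator_bot]
    -- all products of functionals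
    have hfg : ∀ f g : V →ₗ[ℂ] ℂ, QuadraticMap.linMulLin f g ∈ S := by
      have h1 : ∀ H ∈ reflArrangement W, ∀ g : V →ₗ[ℂ] ℂ,
          QuadraticMap.linMulLin (α H) g ∈ S := by
        intro H hH g
        have hg : g ∈ Submodule.span ℂ {f : V →ₗ[ℂ] ℂ | ∃ H ∈ reflArrangement W, f = α H} := by
          rw [hZ]; trivial
        induction hg using Submodule.span_induction with
        | mem g hgm =>
          obtain ⟨K, hK, rfl⟩ := hgm
          exact hall H hH K hK
        | zero =>
          have h0 : QuadraticMap.linMulLin (α H) (0 : V →ₗ[ℂ] ℂ) = 0 := by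
            ext x; simp [QuadraticMap.linMulLin_apply]
          rw [h0]; exact zero_mem _
        | add p q hp hq ihp ihq =>
          have hadd : QuadraticMap.linMulLin (α H) (p + q)
              = QuadraticMap.linMulLin (α H) p + QuadraticMap.linMulLin (α H) q := by
            ext x
            simp only [QuadraticMap.linMulLin_apply, QuadraticMap.add_apply,
              LinearMap.add_apply]
            ring
          rw [hadd]; exact add_mem ihp ihq
        | smul c p hp ihp =>
          have hsmul : QuadraticMap.linMulLin (α H) (c • p)
              = c • QuadraticMap.linMulLin (α H) p := by
            ext x
            simp only [QuadraticMap.linMulLin_apply, QuadraticMap.smul_apply,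
              LinearMap.smul_apply, smul_eq_mul]
            ring
          rw [hsmul]; exact Submodule.smul_mem _ _ ihp
      intro f g
      have hf : f ∈ Submodule.span ℂ {f : V →ₗ[ℂ] ℂ | ∃ H ∈ reflArrangement W, f = α H} := by
        rw [hZ]; trivial
      induction hf using Submodule.span_induction with
      | mem f hfm =>
        obtain ⟨H, hH, rfl⟩ := hfm
        exact h1 H hH g
      | zero =>
        have h0 : QuadraticMap.linMulLin (0 : V →ₗ[ℂ] ℂ) g = 0 := by
          ext x; simp [QuadraticMap.linMulLin_apply]
        rw [h0]; exact zero_mem _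
      | add p q hp hq ihp ihq =>
        have hadd : QuadraticMap.linMulLin (p + q) g
            = QuadraticMap.linMulLin p g + QuadraticMap.linMulLin q g := by
          ext x
          simp only [QuadraticMap.linMulLin_apply, QuadraticMap.add_apply,
            LinearMap.add_apply]
          ring
        rw [hadd]; exact add_mem ihp ihq
      | smul c p hp ihp =>
        have hsmul : QuadraticMap.linMulLin (c • p) g
            = c • QuadraticMap.linMulLin p g := by
          ext x
          simp only [QuadraticMap.linMulLin_apply, QuadraticMap.smul_apply,
            LinearMap.smul_apply, smul_eq_mul]
          ring
        rw [hsmul]; exact Submodule.smul_mem _ _ ihp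
    -- conclude: every quadratic form is a combination
    rw [eq_top_iff]
    intro Q _
    haveI : Invertible (2 : ℂ) := invertibleOfNonzero two_ne_zero
    set b := Module.finBasis ℂ V with hb
    set B : LinearMap.BilinMap ℂ V ℂ := (QuadraticMap.associatedHom ℂ) Q with hB
    have hQB : ∀ x, Q x = B x x := by
      intro x
      conv_lhs => rw [← QuadraticMap.toQuadraticMap_associated ℂ Q]
      rw [show ((QuadraticMap.associatedHom ℂ) Q).toQuadraticMap x = B x x from
        LinearMap.BilinMap.toQuadraticMap_apply _ _]
    have expand : ∀ x, B x x
        = ∑ i, ∑ j, b.repr x i * (b.repr x j * B (b i) (b j)) := by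
      intro x
      conv_lhs => rw [← b.sum_repr x]
      simp only [map_sum, LinearMap.sum_apply, map_smul, LinearMap.smul_apply, smul_eq_mul]
      rw [Finset.sum_comm]
      refine Finset.sum_congr rfl fun i _ => ?_
      rw [Finset.mul_sum]
      exact Finset.sum_congr rfl fun j _ => by ring
    have hQsum : Q = ∑ i, ∑ j, (B (b i) (b j)) •
        QuadraticMap.linMulLin (b.coord i) (b.coord j) := by
      ext x
      rw [hQB, expand]
      rw [QuadraticMap.sum_apply]
      refine Finset.sum_congr rfl fun i _ => ?_
      rw [QuadraticMap.sum_apply]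
      refine Finset.sum_congr rfl fun j _ => ?_
      simp only [QuadraticMap.smul_apply, QuadraticMap.linMulLin_apply,
        Basis.coord_apply, smul_eq_mul]
      ring
    rw [hQsum]
    exact Submodule.sum_mem _ fun i _ => Submodule.sum_mem _ fun j _ =>
      Submodule.smul_mem _ _ (hfg _ _)
end

section
/- Let W ⊆ GL(V) be a finite group generated by pseudo-reflections whose reflection arrangement 𝒜 is essential. Then an element w ∈ W satisfies w(H) = H for every H ∈ 𝒜 if and only if w lies in the center Z(W) of W. (In other words, the kernel of the permutation action of W on 𝒜 is exactly Z(W).) -/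
lemma exists_scalar {V : Type*} [AddCommGroup V] [Module ℂ V]
    (f g : V →ₗ[ℂ] ℂ) (h : LinearMap.ker f ≤ LinearMap.ker g)
    (v₀ : V) (hv₀ : f v₀ ≠ 0) :
    ∃ c : ℂ, ∀ v, g v = c * f v := by
  refine ⟨g v₀ / f v₀, fun v => ?_⟩
  have hmem : v - (f v / f v₀) • v₀ ∈ LinearMap.ker f := by
    simp only [LinearMap.mem_ker, map_sub, map_smul, smul_eq_mul]
    field_simp; ring
  have h2 := h hmem
  simp only [LinearMap.mem_ker, map_sub, map_smul, smul_eq_mul, sub_eq_zero] at h2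
  rw [h2]; field_simp



lemma comm_key {V : Type*} [AddCommGroup V] [Module ℂ V]
    (s w : V ≃ₗ[ℂ] V) (hs : IsPseudoReflection s)
    (hford : IsOfFinOrder (s * w * s⁻¹ * w⁻¹))
    (hfix : Submodule.map (w : V →ₗ[ℂ] V) (LinearMap.ker ((s : V →ₗ[ℂ] V) - LinearMap.id))
      = LinearMap.ker ((s : V →ₗ[ℂ] V) - LinearMap.id)) :
    s * w = w * s := by
  obtain ⟨-, f, hf, hker⟩ := hs
  -- membership in ker f ↔ fixed by s
  have memf : ∀ x, f x = 0 ↔ s x = x := by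
    intro x
    have : (x ∈ LinearMap.ker f) ↔ x ∈ LinearMap.ker ((s : V →ₗ[ℂ] V) - LinearMap.id) := by
      rw [hker]
    simpa [LinearMap.mem_ker, sub_eq_zero] using this
  obtain ⟨v₀, hv₀⟩ : ∃ v₀, f v₀ ≠ 0 := by
    by_contra h'
    push_neg at h'
    exact hf (LinearMap.ext fun v => h' v)
  -- basic stability facts
  have hsfix : ∀ x, f x = 0 → s x = x := fun x hx => (memf x).mp hx
  have hsinv : ∀ x, s x = x → s⁻¹ x = x := by
    intro x hx
    conv_lhs => rw [← hx]
    exact s.symm_apply_apply x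
  have hwmem : ∀ x, f x = 0 → f (w x) = 0 := by
    intro x hx
    have hxH : x ∈ LinearMap.ker ((s : V →ₗ[ℂ] V) - LinearMap.id) := by
      rw [← hker]; exact hx
    have : w x ∈ LinearMap.ker ((s : V →ₗ[ℂ] V) - LinearMap.id) := by
      rw [← hfix]; exact Submodule.mem_map_of_mem hxH
    rw [← hker] at this; exact this
  have hwinv : ∀ x, f x = 0 → f (w⁻¹ x) = 0 := by
    intro x hx
    have hxH : x ∈ LinearMap.ker ((s : V →ₗ[ℂ] V) - LinearMap.id) := by
      rw [← hker]; exact hx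
    rw [← hfix] at hxH
    obtain ⟨y, hy, rfl⟩ := hxH
    show f (w⁻¹ (w y)) = 0
    have h5 : w⁻¹ (w y) = y := w.symm_apply_apply y
    rw [h5]
    rw [← hker] at hy; exact hy
  -- scalar factors
  have get_c : ∀ u : V ≃ₗ[ℂ] V, (∀ x, f x = 0 → f (u x) = 0) →
      ∃ c : ℂ, ∀ v, f (u v) = c * f v := by
    intro u hu
    exact exists_scalar f (f ∘ₗ (u : V →ₗ[ℂ] V)) (fun x hx => hu x hx) v₀ hv₀
  obtain ⟨c₁, hc₁⟩ := get_c s (fun x hx => by rw [hsfix x hx]; exact hx)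
  obtain ⟨c₂, hc₂⟩ := get_c w hwmem
  obtain ⟨c₃, hc₃⟩ := get_c s⁻¹ (fun x hx => by rw [hsinv x (hsfix x hx)]; exact hx)
  obtain ⟨c₄, hc₄⟩ := get_c w⁻¹ hwinv
  have h13 : c₁ * c₃ = 1 := by
    have := hc₁ (s⁻¹ v₀)
    rw [show s (s⁻¹ v₀) = v₀ from s.apply_symm_apply v₀, hc₃ v₀] at this
    have h2 : (1 - c₁ * c₃) * f v₀ = 0 := by linear_combination this
    rcases mul_eq_zero.mp h2 with h | h
    · linear_combination -h
    · exact absurd h hv₀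
  have h24 : c₂ * c₄ = 1 := by
    have := hc₂ (w⁻¹ v₀)
    rw [show w (w⁻¹ v₀) = v₀ from w.apply_symm_apply v₀, hc₄ v₀] at this
    have h2 : (1 - c₂ * c₄) * f v₀ = 0 := by linear_combination this
    rcases mul_eq_zero.mp h2 with h | h
    · linear_combination -h
    · exact absurd h hv₀
  set g := s * w * s⁻¹ * w⁻¹ with hg
  have hgapp : ∀ v, g v = s (w (s⁻¹ (w⁻¹ v))) := fun v => rfl
  have hgf : ∀ v, f (g v) = f v := by
    intro v
    rw [hgapp, hc₁, hc₂, hc₃, hc₄]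
    have : c₁ * (c₂ * (c₃ * (c₄ * f v))) = (c₁ * c₃) * (c₂ * c₄) * f v := by ring
    rw [this, h13, h24]; ring
  have hgH : ∀ x, f x = 0 → g x = x := by
    intro x hx
    rw [hgapp]
    have h4 : f (w⁻¹ x) = 0 := hwinv x hx
    have h3 : s⁻¹ (w⁻¹ x) = w⁻¹ x := hsinv _ (hsfix _ h4)
    have h6 : w (w⁻¹ x) = x := w.apply_symm_apply x
    rw [h3, h6, hsfix x hx]
  -- g is unipotent of finite order, hence identity
  have hgone : g = 1 := by
    obtain ⟨n, hn, hgn⟩ := hford.exists_pow_eq_one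
    ext v
    have hd : f (g v - v) = 0 := by rw [map_sub, hgf, sub_self]
    have hfixd : g (g v - v) = g v - v := hgH _ hd
    have hpow : ∀ k : ℕ, (g ^ k) v = v + (k : ℂ) • (g v - v) := by
      intro k
      induction k with
      | zero => simp
      | succ k ih =>
        have : (g ^ (k+1)) v = g ((g ^ k) v) := by
          rw [pow_succ']; rfl
        rw [this, ih, map_add, map_smul, hfixd]
        have hgv : g v = v + (g v - v) := by abel
        rw [hgv]
        push_cast
        module
    have := hpow n
    rw [hgn] at this
    have h0 : (n : ℂ) • (g v - v) = 0 := by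
      have h' : v = v + (n : ℂ) • (g v - v) := this
      exact (left_eq_add.mp h')
    have hnne : (n : ℂ) ≠ 0 := Nat.cast_ne_zero.mpr hn.ne'
    have : g v - v = 0 := by
      rcases smul_eq_zero.mp h0 with h | h
      · exact absurd h hnne
      · exact h
    have hgv : g v = v := sub_eq_zero.mp this
    simpa using hgv
  have h1 : s * w * s⁻¹ * w⁻¹ = 1 := by rw [← hg]; exact hgone
  have h2 : (s * w) * (w * s)⁻¹ = s * w * s⁻¹ * w⁻¹ := by group
  rw [h1] at h2
  exact mul_inv_eq_one.mp h2

set_option maxHeartbeats 1000000 in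
/-- For a finite pseudo-reflection group `W` with essential reflection
arrangement `𝒜`, an element `w ∈ W` fixes every `H ∈ 𝒜` (setwise) if and only if
`w` is central in `W`: the kernel of the permutation action of `W` on `𝒜` is
exactly `Z(W)`. -/
theorem stmt_14 {V : Type*} [AddCommGroup V] [Module ℂ V] [FiniteDimensional ℂ V]
    (W : Subgroup (V ≃ₗ[ℂ] V)) (hfin : (W : Set (V ≃ₗ[ℂ] V)).Finite)
    (hgen : W = Subgroup.closure {s : V ≃ₗ[ℂ] V | s ∈ W ∧ IsPseudoReflection s})
    (hess : sInf (reflArrangement W) = (⊥ : Submodule ℂ V)) :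
    ∀ w ∈ W,
      ((∀ H ∈ reflArrangement W, Submodule.map (w : V →ₗ[ℂ] V) H = H) ↔
        ∀ v ∈ W, v * w = w * v) := by
  intro w hw
  haveI : Finite W := hfin.to_subtype
  constructor
  · intro hfix v hv
    have hv' : v ∈ Subgroup.closure {s : V ≃ₗ[ℂ] V | s ∈ W ∧ IsPseudoReflection s} :=
      hgen ▸ hv
    induction hv' using Subgroup.closure_induction with
    | mem s hs =>
      obtain ⟨hsW, hsr⟩ := hs
      have hmem : s * w * s⁻¹ * w⁻¹ ∈ W :=
        mul_mem (mul_mem (mul_mem hsW hw) (inv_mem hsW)) (inv_mem hw)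
      have hford : IsOfFinOrder (s * w * s⁻¹ * w⁻¹) :=
        Submonoid.isOfFinOrder_coe.mpr (isOfFinOrder_of_finite (⟨_, hmem⟩ : W))
      exact comm_key s w hsr hford (hfix _ ⟨s, hsW, hsr, rfl⟩)
    | one => rw [one_mul, mul_one]
    | mul a b ha hb iha ihb =>
      have iha' := iha (by rw [hgen]; exact ha)
      have ihb' := ihb (by rw [hgen]; exact hb)
      rw [mul_assoc, ihb', ← mul_assoc, iha', mul_assoc]
    | inv a ha iha =>
      have iha := iha (by rw [hgen]; exact ha)
      have h1 : a⁻¹ * (a * w) * a⁻¹ = a⁻¹ * (w * a) * a⁻¹ := by rw [iha]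
      have h2 : a⁻¹ * (a * w) * a⁻¹ = w * a⁻¹ := by group
      have h3 : a⁻¹ * (w * a) * a⁻¹ = a⁻¹ * w := by group
      rw [h2, h3] at h1
      exact h1.symm
  · intro hcen H hH
    obtain ⟨s, hsW, hsr, rfl⟩ := hH
    have hc : s * w = w * s := hcen s hsW
    have hc' : s * w⁻¹ = w⁻¹ * s := by
      have h1 : w⁻¹ * (s * w) * w⁻¹ = w⁻¹ * (w * s) * w⁻¹ := by rw [hc]
      have h2 : w⁻¹ * (s * w) * w⁻¹ = w⁻¹ * s := by group
      have h3 : w⁻¹ * (w * s) * w⁻¹ = s * w⁻¹ := by group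
      rw [h2, h3] at h1
      exact h1.symm
    have memk : ∀ x : V, x ∈ LinearMap.ker ((s : V →ₗ[ℂ] V) - LinearMap.id) ↔ s x = x := by
      intro x
      simp [LinearMap.mem_ker, sub_eq_zero]
    apply le_antisymm
    · rintro x ⟨y, hy, rfl⟩
      have hy' : s y = y := (memk y).mp hy
      refine (memk _).mpr ?_
      show s (w y) = w y
      have e1 : s (w y) = (s * w) y := rfl
      have e2 : (w * s) y = w (s y) := rfl
      rw [e1, hc, e2, hy']
    · intro x hx
      have hx : s x = x := (memk x).mp hx
      refine ⟨w⁻¹ x, ?_, w.apply_symm_apply x⟩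
      show w⁻¹ x ∈ LinearMap.ker ((s : V →ₗ[ℂ] V) - LinearMap.id)
      refine (memk _).mpr ?_
      have e1 : s (w⁻¹ x) = (s * w⁻¹) x := rfl
      have e2 : (w⁻¹ * s) x = w⁻¹ (s x) := rfl
      rw [e1, hc', e2, hx]
end

section
/- Let W ⊆ GL(V) be a finite group generated by pseudo-reflections acting irreducibly on V, with nonempty reflection arrangement 𝒜, and fix a W-invariant hermitian inner product on V; for each H ∈ 𝒜 let e_H be a nonzero vector spanning the orthogonal complement of H. Suppose n is a positive integer such that for all w ∈ W, H ∈ 𝒜 and ζ ∈ ℂ, w·e_H = ζ·e_H implies ζⁿ = 1. Then zⁿ = 1 for every z in the center Z(W). In particular, the exponent of Z(W) divides κ(W), and since Z(W) is cyclic for irreducible W, the order |Z(W)| divides κ(W). -/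
open scoped ComplexInnerProductSpace

/-- Let `W` be an irreducible finite pseudo-reflection group on `V`
(preserving a hermitian inner product) with nonempty reflection arrangement `𝒜`, and for
each `H ∈ 𝒜` let `e_H` span `Hᗮ`. If `n > 0` is such that `w e_H = ζ • e_H` always forces
`ζⁿ = 1`, then every central element `z` of `W` satisfies `zⁿ = 1`; in particular the
exponent of `Z(W)` (= its order, `Z(W)` being cyclic) divides `κ(W)`. -/
theorem stmt_15 {V : Type*} [NormedAddCommGroup V] [InnerProductSpace ℂ V]
    [FiniteDimensional ℂ V] [Nontrivial V]
    (W : Subgroup (V ≃ₗ[ℂ] V)) (hfin : (W : Set (V ≃ₗ[ℂ] V)).Finite)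
    (hgen : W = Subgroup.closure {s : V ≃ₗ[ℂ] V | s ∈ W ∧ IsPseudoReflection s})
    (hinv : ∀ w ∈ W, ∀ x y : V, ⟪w x, w y⟫ = ⟪x, y⟫)
    (hirr : ∀ U : Submodule ℂ V,
      (∀ w ∈ W, Submodule.map (w : V →ₗ[ℂ] V) U ≤ U) → U = ⊥ ∨ U = ⊤)
    (hne : (reflArrangement W).Nonempty)
    (e : Submodule ℂ V → V)
    (he : ∀ H ∈ reflArrangement W, e H ≠ 0 ∧ (ℂ ∙ e H) = Hᗮ)
    (n : ℕ) (hn : 0 < n)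
    (heig : ∀ w ∈ W, ∀ H ∈ reflArrangement W, ∀ ζ : ℂ, w (e H) = ζ • e H → ζ ^ n = 1) :
    ∀ z ∈ W, (∀ v ∈ W, v * z = z * v) → z ^ n = 1 := by
  intro z hz hcomm
  -- z has an eigenvalue ζ
  set f : Module.End ℂ V := (z : V →ₗ[ℂ] V)
  obtain ⟨ζ, hζ⟩ := Module.End.exists_eigenvalue f
  set U := Module.End.eigenspace f ζ with hU
  have hUne : U ≠ ⊥ := hζ
  -- U is W-invariant
  have hWinv : ∀ w ∈ W, Submodule.map (w : V →ₗ[ℂ] V) U ≤ U := by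
    intro w hw y hy
    obtain ⟨x, hx, rfl⟩ := hy
    have hx' : z x = ζ • x := by
      have := (Module.End.mem_eigenspace_iff).1 hx
      simpa [f] using this
    have hcw := hcomm w hw
    have : z (w x) = ζ • (w x) := by
      have h1 : (w * z) x = (z * w) x := by rw [hcw]
      have h2 : w (z x) = z (w x) := h1
      rw [hx'] at h2
      simpa [map_smul] using h2.symm
    exact (Module.End.mem_eigenspace_iff).2 (by simpa [f] using this)
  -- irreducibility forces U = ⊤, so z = ζ • id
  have hUtop : U = ⊤ := (hirr U hWinv).resolve_left hUne
  have hscal : ∀ x : V, z x = ζ • x := by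
    intro x
    have : x ∈ U := hUtop ▸ Submodule.mem_top
    simpa [f] using (Module.End.mem_eigenspace_iff).1 this
  -- apply to e H
  obtain ⟨H, hH⟩ := hne
  have heH := (he H hH).1
  have hζn : ζ ^ n = 1 := heig z hz H hH ζ (hscal (e H))
  -- conclude z ^ n = 1
  have hpow : ∀ m : ℕ, ∀ x : V, (z ^ m) x = ζ ^ m • x := by
    intro m x
    induction m with
    | zero => simp
    | succ m ih =>
      rw [pow_succ, pow_succ]
      have : (z ^ m * z) x = (z ^ m) (z x) := rfl
      rw [this, hscal, map_smul, ih, smul_smul, mul_comm]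
  ext x
  have := hpow n x
  rw [hζn, one_smul] at this
  simpa using this
end

section
/- Let d, e, r be positive integers with r ≥ 3, and let W = G(de,e,r) ⊆ GL_r(ℂ) be the group of r × r monomial matrices whose nonzero entries are de-th roots of unity and whose product of nonzero entries is a d-th root of unity. Then for every μ ∈ ℂ with μ^{de} = 1 there exist w ∈ W, indices i ≠ j, and ζ ∈ ℂ with ζ^{de} = 1, such that w·(e_i − ζ·e_j) = μ·(e_i − ζ·e_j). (Together with the eigenvalue bound, this shows κ(G(de,e,r)) = de for r ≥ 3.) -/
/-- Membership in the imprimitive reflection group `G(de,e,r) ⊆ GL_r(ℂ)`: `w` is a monomial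
matrix, `w e_i = λ_i • e_{σ(i)}`, whose nonzero entries `λ_i` are `de`-th roots of unity and
whose product of nonzero entries is a `d`-th root of unity. -/
def MemG (d e r : ℕ) (w : (Fin r → ℂ) ≃ₗ[ℂ] (Fin r → ℂ)) : Prop :=
  ∃ (σ : Equiv.Perm (Fin r)) (lam : Fin r → ℂ),
    (∀ i, lam i ^ (d * e) = 1) ∧ ((∏ i, lam i) ^ d = 1) ∧
    ∀ i, w ((Pi.single i 1 : Fin r → ℂ)) = lam i • (Pi.single (σ i) 1 : Fin r → ℂ)

/-- For `r ≥ 3`, every `de`-th root of unity `μ` occurs as an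
eigenvalue of some `w ∈ G(de,e,r)` on a root `e_i − ζ·e_j` (`i ≠ j`, `ζ^{de} = 1`). -/
theorem stmt_18 (d e r : ℕ) (hd : 0 < d) (he : 0 < e) (hr : 3 ≤ r)
    (μ : ℂ) (hμ : μ ^ (d * e) = 1) :
    ∃ w : (Fin r → ℂ) ≃ₗ[ℂ] (Fin r → ℂ), MemG d e r w ∧
      ∃ i j : Fin r, i ≠ j ∧ ∃ ζ : ℂ, ζ ^ (d * e) = 1 ∧
        w ((Pi.single i 1 : Fin r → ℂ) - ζ • (Pi.single j 1 : Fin r → ℂ)) =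
          μ • ((Pi.single i 1 : Fin r → ℂ) - ζ • (Pi.single j 1 : Fin r → ℂ)) := by
  have hde : 0 < d * e := Nat.mul_pos hd he
  have hμ0 : μ ≠ 0 := by
    intro h
    rw [h, zero_pow hde.ne'] at hμ
    exact one_ne_zero hμ.symm
  set i0 : Fin r := ⟨0, by omega⟩
  set i1 : Fin r := ⟨1, by omega⟩
  set i2 : Fin r := ⟨2, by omega⟩
  have h01 : i0 ≠ i1 := by simp [i0, i1, Fin.ext_iff]
  have h02 : i0 ≠ i2 := by simp [i0, i2, Fin.ext_iff]
  have h12 : i1 ≠ i2 := by simp [i1, i2, Fin.ext_iff]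
  -- exponents
  set c : Fin r → ℕ := fun i =>
    (if i = i0 then 1 else 0) + (if i = i1 then 1 else 0) +
      (if i = i2 then 2 * (d * e) - 2 else 0) with hc
  set lam : Fin r → ℂ := fun i => μ ^ c i with hlam
  have hlamne : ∀ i, lam i ≠ 0 := fun i => pow_ne_zero _ hμ0
  set w : (Fin r → ℂ) ≃ₗ[ℂ] (Fin r → ℂ) :=
    LinearEquiv.piCongrRight fun i => LinearEquiv.smulOfNeZero ℂ ℂ (lam i) (hlamne i) with hw
  have hwapp : ∀ x : Fin r → ℂ, ∀ j, w x j = lam j * x j := by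
    intro x j
    simp [hw, LinearEquiv.smulOfNeZero, LinearEquiv.smulOfUnit, LinearEquiv.piCongrRight,
      Units.smul_def, smul_eq_mul]
  have hsingle : ∀ i : Fin r, w (Pi.single i 1 : Fin r → ℂ) = lam i • (Pi.single i 1 : Fin r → ℂ) := by
    intro i
    funext j
    rw [hwapp]
    by_cases h : j = i
    · subst h; simp
    · simp [Pi.single_apply, h]
  refine ⟨w, ⟨1, lam, ?_, ?_, ?_⟩, i0, i1, h01, 1, one_pow _, ?_⟩
  · intro i
    show (μ ^ c i) ^ (d * e) = 1
    rw [← pow_mul, mul_comm (c i) (d * e), pow_mul, hμ, one_pow]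
  · have hsum : ∑ i, c i = 2 * (d * e) := by
      rw [hc]
      rw [Finset.sum_add_distrib, Finset.sum_add_distrib]
      rw [Finset.sum_ite_eq' Finset.univ i0 (fun _ => 1),
        Finset.sum_ite_eq' Finset.univ i1 (fun _ => 1),
        Finset.sum_ite_eq' Finset.univ i2 (fun _ => 2 * (d * e) - 2)]
      simp only [Finset.mem_univ, if_true]
      omega
    have hprod : ∏ i, lam i = 1 := by
      rw [hlam]
      simp only
      rw [Finset.prod_pow_eq_pow_sum]
      rw [hsum, mul_comm 2 (d * e), pow_mul, hμ, one_pow]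
    rw [hprod, one_pow]
  · intro i
    rw [Equiv.Perm.one_apply]
    exact hsingle i
  · have h0 : lam i0 = μ := by simp [hlam, hc, h01, h02]
    have h1 : lam i1 = μ := by simp [hlam, hc, h01.symm, h12]
    rw [one_smul, map_sub, hsingle i0, hsingle i1, h0, h1, smul_sub]
end
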